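/- arXiv:1903.06857 — 5 statements merged into one kernel-verified Lean document; each statement's English description precedes it below -/
import Mathlib

section
/- Let H₁ and H₂ be complex Hilbert spaces, Y : H₂ → H₁ and Z : H₁ → H₂ bounded linear operators, and let T be the off-diagonal operator matrix on H₁ ⊕ H₂ given by T(x₁, x₂) = (Y x₂, Z x₁). Then w(T) = sup over θ ∈ ℝ of (1/2)‖e^{iθ} Y + e^{-iθ} Z*‖, where Z* : H₂ → H₁ is the adjoint of Z and ‖·‖ is the operator norm. -/
noncomputable def numRadius {H : Type*} [NormedAddCommGroup H] [InnerProductSpace ℂ H]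
    (T : H →L[ℂ] H) : ℝ :=
  sSup {r : ℝ | ∃ x : H, ‖x‖ = 1 ∧ r = ‖(inner ℂ (T x) x : ℂ)‖}

set_option maxHeartbeats 1000000
set_option synthInstance.maxHeartbeats 200000

theorem offdiag_operator_matrix_numRadius_sup
    {H₁ H₂ : Type*} [NormedAddCommGroup H₁] [InnerProductSpace ℂ H₁]
    [NormedAddCommGroup H₂] [InnerProductSpace ℂ H₂]
    [CompleteSpace H₁] [CompleteSpace H₂]
    (Y : H₂ →L[ℂ] H₁) (Z : H₁ →L[ℂ] H₂)
    (T : WithLp 2 (H₁ × H₂) →L[ℂ] WithLp 2 (H₁ × H₂))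
    (hT : ∀ x : WithLp 2 (H₁ × H₂),
      WithLp.equiv 2 (H₁ × H₂) (T x) =
        (Y (WithLp.equiv 2 (H₁ × H₂) x).2, Z (WithLp.equiv 2 (H₁ × H₂) x).1)) :
    numRadius T = ⨆ θ : ℝ,
      (1 / 2 : ℝ) * ‖Complex.exp (θ * Complex.I) • Y +
        Complex.exp (-θ * Complex.I) • ContinuousLinearMap.adjoint Z‖ := by
  classical
  set A : ℝ → (H₂ →L[ℂ] H₁) := fun θ =>
    Complex.exp (θ * Complex.I) • Y +
      Complex.exp (-θ * Complex.I) • ContinuousLinearMap.adjoint Z with hA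
  set S : Set ℝ :=
    {r : ℝ | ∃ x : WithLp 2 (H₁ × H₂), ‖x‖ = 1 ∧ r = ‖(inner ℂ (T x) x : ℂ)‖} with hSdef
  have hgoal : numRadius T = sSup S := rfl
  have hSnn : ∀ r ∈ S, 0 ≤ r := by
    rintro r ⟨x, hx, rfl⟩; positivity
  have hSbdd : BddAbove S := by
    refine ⟨‖T‖, ?_⟩
    rintro r ⟨x, hx, rfl⟩
    calc ‖(inner ℂ (T x) x : ℂ)‖ ≤ ‖T x‖ * ‖x‖ := norm_inner_le_norm _ _
      _ ≤ ‖T‖ * ‖x‖ * ‖x‖ := by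
          have := T.le_opNorm x
          nlinarith [norm_nonneg x]
      _ = ‖T‖ := by rw [hx]; ring
  have hconj : ∀ t : ℝ, (starRingEnd ℂ) (Complex.exp (t * Complex.I)) =
      Complex.exp (-t * Complex.I) := by
    intro t
    rw [← Complex.exp_conj]
    congr 1
    simp [Complex.conj_ofReal]
  have hconj' : ∀ t : ℝ, (starRingEnd ℂ) (Complex.exp (-t * Complex.I)) =
      Complex.exp (t * Complex.I) := by
    intro t
    rw [← Complex.exp_conj]
    congr 1
    simp [Complex.conj_ofReal]
  have hexp : ∀ t : ℝ, ‖Complex.exp ((t : ℂ) * Complex.I)‖ = 1 := by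
    intro t
    rw [Complex.norm_exp_ofReal_mul_I]
  have hexp' : ∀ t : ℝ, ‖Complex.exp (-(t : ℂ) * Complex.I)‖ = 1 := by
    intro t
    have := hexp (-t)
    push_cast at this
    convert this using 3
  -- operators applied to components
  have hfst : ∀ x : WithLp 2 (H₁ × H₂), (T x).fst = Y x.snd := fun x =>
    congrArg Prod.fst (hT x)
  have hsnd : ∀ x : WithLp 2 (H₁ × H₂), (T x).snd = Z x.fst := fun x =>
    congrArg Prod.snd (hT x)
  -- key identity
  have key : ∀ (θ : ℝ) (x : WithLp 2 (H₁ × H₂)),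
      (Complex.exp (-θ * Complex.I) * inner ℂ (T x) x).re
        = (inner ℂ ((A θ) x.snd) x.fst : ℂ).re := by
    intro θ x
    have hinner : (inner ℂ (T x) x : ℂ)
        = inner ℂ (Y x.snd) x.fst + inner ℂ (Z x.fst) x.snd := by
      rw [WithLp.prod_inner_apply, show (T x).ofLp.1 = Y x.snd from hfst x,
        show (T x).ofLp.2 = Z x.fst from hsnd x]
      rfl
    have hAi : (inner ℂ ((A θ) x.snd) x.fst : ℂ)
        = Complex.exp (-θ * Complex.I) * inner ℂ (Y x.snd) x.fst
          + Complex.exp (θ * Complex.I) *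
              (starRingEnd ℂ) (inner ℂ (Z x.fst) x.snd) := by
      rw [hA]
      simp only [ContinuousLinearMap.add_apply, ContinuousLinearMap.smul_apply,
        inner_add_left, inner_smul_left, ContinuousLinearMap.adjoint_inner_left]
      rw [hconj θ, hconj' θ]
      congr 1
      rw [← inner_conj_symm]
    have hsw : Complex.exp (θ * Complex.I) * (starRingEnd ℂ) (inner ℂ (Z x.fst) x.snd)
        = (starRingEnd ℂ) (Complex.exp (-θ * Complex.I) * inner ℂ (Z x.fst) x.snd) := by
      rw [map_mul, hconj' θ]
    rw [hinner, hAi, hsw, mul_add, Complex.add_re, Complex.add_re, Complex.conj_re]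
  have habs : ∀ (θ : ℝ) (c : ℂ), ‖Complex.exp (-θ * Complex.I) * c‖ = ‖c‖ := by
    intro θ c
    rw [norm_mul, hexp', one_mul]
  -- bound for the RHS family
  have hfnn : ∀ θ : ℝ, 0 ≤ (1 / 2 : ℝ) * ‖A θ‖ := by
    intro θ; positivity
  have hfbdd : BddAbove (Set.range fun θ : ℝ => (1 / 2 : ℝ) * ‖A θ‖) := by
    refine ⟨(‖Y‖ + ‖Z‖) / 2, ?_⟩
    rintro r ⟨θ, rfl⟩
    have h1 : ‖A θ‖ ≤ ‖Y‖ + ‖Z‖ := by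
      have h2 : ‖Complex.exp ((θ : ℂ) * Complex.I) • Y‖ ≤ ‖Y‖ := by
        calc ‖Complex.exp ((θ : ℂ) * Complex.I) • Y‖
            ≤ ‖Complex.exp ((θ : ℂ) * Complex.I)‖ * ‖Y‖ :=
              ContinuousLinearMap.opNorm_smul_le _ _
          _ = ‖Y‖ := by rw [hexp, one_mul]
      have h3 : ‖Complex.exp (-(θ : ℂ) * Complex.I) • ContinuousLinearMap.adjoint Z‖
          ≤ ‖Z‖ := by
        calc ‖Complex.exp (-(θ : ℂ) * Complex.I) • ContinuousLinearMap.adjoint Z‖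
            ≤ ‖Complex.exp (-(θ : ℂ) * Complex.I)‖ * ‖ContinuousLinearMap.adjoint Z‖ :=
              ContinuousLinearMap.opNorm_smul_le _ _
          _ = ‖Z‖ := by
              rw [hexp', one_mul]
              exact ContinuousLinearMap.adjoint.norm_map Z
      calc ‖A θ‖ ≤ _ + _ := norm_add_le _ _
        _ ≤ ‖Y‖ + ‖Z‖ := add_le_add h2 h3
    linarith
  rw [hgoal]
  show sSup S = ⨆ θ : ℝ, (1 / 2 : ℝ) * ‖A θ‖
  apply le_antisymm
  · -- sSup S ≤ ⨆ θ, (1/2) * ‖A θ‖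
    apply Real.sSup_le
    · rintro r ⟨x, hx, rfl⟩
      set c : ℂ := inner ℂ (T x) x with hc
      set θ : ℝ := c.arg with hθ
      have hec : Complex.exp (-θ * Complex.I) * c = ((‖c‖ : ℝ) : ℂ) := by
        conv_lhs => rw [show c = ↑‖c‖ * Complex.exp (θ * Complex.I) from
          (Complex.norm_mul_exp_arg_mul_I c).symm]
        rw [mul_left_comm, ← Complex.exp_add]
        ring_nf
        simp
      have hre : ‖c‖ = (inner ℂ ((A θ) x.snd) x.fst : ℂ).re := by
        rw [← key θ x, ← hc, hec]
        simp
      have hxsq : ‖x.fst‖ ^ 2 + ‖x.snd‖ ^ 2 = 1 := by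
        rw [← WithLp.prod_norm_sq_eq_of_L2, hx]; norm_num
      have hle : ‖c‖ ≤ (1 / 2 : ℝ) * ‖A θ‖ := by
        rw [hre]
        calc (inner ℂ ((A θ) x.snd) x.fst : ℂ).re
            ≤ ‖(inner ℂ ((A θ) x.snd) x.fst : ℂ)‖ := Complex.re_le_norm _
          _ ≤ ‖(A θ) x.snd‖ * ‖x.fst‖ := norm_inner_le_norm _ _
          _ ≤ (‖A θ‖ * ‖x.snd‖) * ‖x.fst‖ := by
              have := (A θ).le_opNorm x.snd
              nlinarith [norm_nonneg x.fst]
          _ ≤ (1 / 2 : ℝ) * ‖A θ‖ := by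
              nlinarith [norm_nonneg (A θ), sq_nonneg (‖x.fst‖ - ‖x.snd‖),
                norm_nonneg x.fst, norm_nonneg x.snd]
      exact hle.trans (le_ciSup hfbdd θ)
    · exact Real.iSup_nonneg hfnn
  · -- ⨆ θ ≤ sSup S
    refine Real.iSup_le (fun θ => ?_) (Real.sSup_nonneg hSnn)
    by_cases hH₂ : ∀ u : H₂, u = 0
    · have hA0 : ‖A θ‖ = 0 := by
        have : A θ = 0 := by
          ext u
          rw [hH₂ u]
          simp
        rw [this, norm_zero]
      rw [hA0, mul_zero]
      exact Real.sSup_nonneg hSnn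
    · push_neg at hH₂
      obtain ⟨u₀, hu₀⟩ := hH₂
      have hsupnn : 0 ≤ sSup S := Real.sSup_nonneg hSnn
      -- the main estimate for unit vectors
      have key2 : ∀ w : H₂, ‖w‖ = 1 → ‖(A θ) w‖ ≤ 2 * sSup S := by
        intro w hw
        rcases eq_or_ne ((A θ) w) 0 with hg0 | hg0
        · rw [hg0, norm_zero]; linarith
        · set g : H₁ := (A θ) w with hgdef
          set v : H₁ := ‖g‖⁻¹ • g with hv
          have hgn : ‖g‖ ≠ 0 := norm_ne_zero_iff.mpr hg0
          have hvn : ‖v‖ = 1 := norm_smul_inv_norm hg0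
          set s : ℝ := (Real.sqrt 2)⁻¹ with hs
          have hs2 : s ^ 2 = 1 / 2 := by
            rw [hs, inv_pow, Real.sq_sqrt (by norm_num : (0:ℝ) ≤ 2)]
            norm_num
          set x : WithLp 2 (H₁ × H₂) := (WithLp.equiv 2 (H₁ × H₂)).symm (s • v, s • w)
            with hxdef
          have hxfst : x.fst = s • v := rfl
          have hxsnd : x.snd = s • w := rfl
          have hxnorm : ‖x‖ = 1 := by
            have h2 : ‖x‖ ^ 2 = 1 := by
              rw [WithLp.prod_norm_sq_eq_of_L2, hxfst, hxsnd, norm_smul s v, norm_smul s w,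
                hvn, hw]
              simp only [mul_one]
              have hsabs : ‖s‖ = s := Real.norm_of_nonneg (by positivity)
              rw [hsabs]
              nlinarith [hs2]
            nlinarith [norm_nonneg x]
          have hmem : ‖(inner ℂ (T x) x : ℂ)‖ ∈ S := ⟨x, hxnorm, rfl⟩
          have hinner2 : (inner ℂ ((A θ) x.snd) x.fst : ℂ).re = s ^ 2 * ‖g‖ := by
            rw [hxfst, hxsnd]
            have hsm : (A θ) (s • w) = s • g := by
              rw [hgdef, ContinuousLinearMap.map_smul_of_tower]
            have hco : ∀ (r : ℝ) (y : H₁), r • y = (r : ℂ) • y := fun r y =>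
              RCLike.real_smul_eq_coe_smul r y
            rw [hsm, hv, hco s g, hco s (‖g‖⁻¹ • g), hco ‖g‖⁻¹ g, inner_smul_left,
              inner_smul_right, inner_smul_right,
              inner_self_eq_norm_sq_to_K (𝕜 := ℂ) g]
            simp only [Complex.conj_ofReal, ← Complex.ofReal_pow, ← Complex.ofReal_mul,
              Complex.ofReal_re]
            field_simp
            simp only [← Complex.ofReal_pow, Complex.ofReal_re]
            change (((s ^ 2 : ℝ) : ℂ) * ((1 / ‖g‖ : ℝ) : ℂ) * ((‖g‖ : ℝ) : ℂ) ^ 2).re = ‖g‖ * s ^ 2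
            rw [← Complex.ofReal_pow, ← Complex.ofReal_mul,
              ← Complex.ofReal_mul, Complex.ofReal_re]
            field_simp
          have hlow : ‖g‖ / 2 ≤ ‖(inner ℂ (T x) x : ℂ)‖ := by
            have h1 : (Complex.exp (-θ * Complex.I) * inner ℂ (T x) x).re
                ≤ ‖(inner ℂ (T x) x : ℂ)‖ := by
              calc (Complex.exp (-θ * Complex.I) * inner ℂ (T x) x).re
                  ≤ ‖Complex.exp (-θ * Complex.I) * inner ℂ (T x) x‖ := Complex.re_le_norm _
                _ = ‖(inner ℂ (T x) x : ℂ)‖ := habs θ _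
            rw [key θ x, hinner2, hs2] at h1
            linarith
          have := le_csSup hSbdd hmem
          linarith
      -- deduce the operator norm bound
      have hop : ‖A θ‖ ≤ 2 * sSup S := by
        refine ContinuousLinearMap.opNorm_le_bound _ (by linarith) (fun u => ?_)
        rcases eq_or_ne u 0 with rfl | hu
        · simp
        · have hu1 : ‖‖u‖⁻¹ • u‖ = 1 := norm_smul_inv_norm hu
          have h2 := key2 _ hu1
          rw [ContinuousLinearMap.map_smul_of_tower, norm_smul ‖u‖⁻¹ ((A θ) u), norm_inv, norm_norm] at h2
          have hun : (0:ℝ) < ‖u‖ := norm_pos_iff.mpr hu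
          calc ‖(A θ) u‖ = ‖u‖ * (‖u‖⁻¹ * ‖(A θ) u‖) := by field_simp
            _ ≤ ‖u‖ * (2 * sSup S) := mul_le_mul_of_nonneg_left h2 hun.le
            _ = 2 * sSup S * ‖u‖ := by ring
      linarith
end

section
/- Let H be a complex Hilbert space and Y : H → H a bounded linear operator. Let T be the off-diagonal operator matrix on H ⊕ H given by T(x₁, x₂) = (Y x₂, Y x₁). Then w(T) = w(Y). -/
section aux

variable {H : Type*} [NormedAddCommGroup H] [InnerProductSpace ℂ H]

lemma numRadius_nonneg (Y : H →L[ℂ] H) : 0 ≤ numRadius Y := by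
  apply Real.sSup_nonneg
  rintro r ⟨x, hx, rfl⟩
  positivity

lemma numRadius_bddAbove (Y : H →L[ℂ] H) :
    BddAbove {r : ℝ | ∃ x : H, ‖x‖ = 1 ∧ r = ‖(inner ℂ (Y x) x : ℂ)‖} := by
  refine ⟨‖Y‖, ?_⟩
  rintro r ⟨x, hx, rfl⟩
  calc ‖(inner ℂ (Y x) x : ℂ)‖ ≤ ‖Y x‖ * ‖x‖ := norm_inner_le_norm _ _
    _ ≤ ‖Y‖ * ‖x‖ * ‖x‖ := by
        have := Y.le_opNorm x
        nlinarith [norm_nonneg (Y x), norm_nonneg x, norm_nonneg (Y : H →L[ℂ] H)]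
    _ = ‖Y‖ := by rw [hx]; ring

lemma inner_le_numRadius (Y : H →L[ℂ] H) (u : H) :
    ‖(inner ℂ (Y u) u : ℂ)‖ ≤ numRadius Y * ‖u‖ ^ 2 := by
  rcases eq_or_ne u 0 with rfl | hu
  · simp
  · have hn : ‖u‖ ≠ 0 := norm_ne_zero_iff.mpr hu
    set x : H := (‖u‖ : ℂ)⁻¹ • u with hxdef
    have hx : ‖x‖ = 1 := by
      rw [hxdef, norm_smul]
      simp [hn]
    have hmem : ‖(inner ℂ (Y x) x : ℂ)‖ ∈
        {r : ℝ | ∃ x : H, ‖x‖ = 1 ∧ r = ‖(inner ℂ (Y x) x : ℂ)‖} := ⟨x, hx, rfl⟩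
    have hle := le_csSup (numRadius_bddAbove Y) hmem
    have hval : ‖(inner ℂ (Y x) x : ℂ)‖ = ‖(inner ℂ (Y u) u : ℂ)‖ / ‖u‖ ^ 2 := by
      rw [hxdef]
      rw [map_smul, inner_smul_left, inner_smul_right]
      simp only [norm_mul, RCLike.norm_conj, norm_inv, Complex.norm_real, Real.norm_eq_abs,
        abs_norm]
      field_simp
    rw [hval] at hle
    have h2 : (0:ℝ) < ‖u‖ ^ 2 := by positivity
    calc ‖(inner ℂ (Y u) u : ℂ)‖ = ‖(inner ℂ (Y u) u : ℂ)‖ / ‖u‖ ^ 2 * ‖u‖ ^ 2 := by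
          field_simp
      _ ≤ numRadius Y * ‖u‖ ^ 2 := by
          exact mul_le_mul_of_nonneg_right hle h2.le

end aux

theorem offdiag_operator_matrix_numRadius_same
    {H : Type*} [NormedAddCommGroup H] [InnerProductSpace ℂ H]
    (Y : H →L[ℂ] H)
    (T : WithLp 2 (H × H) →L[ℂ] WithLp 2 (H × H))
    (hT : ∀ x : WithLp 2 (H × H),
      WithLp.equiv 2 (H × H) (T x) =
        (Y (WithLp.equiv 2 (H × H) x).2, Y (WithLp.equiv 2 (H × H) x).1)) :
    numRadius T = numRadius Y := by
  -- components of T x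
  have hT1 : ∀ x : WithLp 2 (H × H), (T x).fst = Y x.snd := fun x =>
    congrArg Prod.fst (hT x)
  have hT2 : ∀ x : WithLp 2 (H × H), (T x).snd = Y x.fst := fun x =>
    congrArg Prod.snd (hT x)
  have hinner : ∀ z : WithLp 2 (H × H),
      (inner ℂ (T z) z : ℂ) = inner ℂ (Y z.snd) z.fst + inner ℂ (Y z.fst) z.snd := by
    intro z
    rw [WithLp.prod_inner_apply, WithLp.ofLp_fst, WithLp.ofLp_snd, WithLp.ofLp_fst,
      WithLp.ofLp_snd, hT1, hT2]
  apply le_antisymm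
  · -- sSup S_T ≤ numRadius Y
    apply Real.sSup_le _ (numRadius_nonneg Y)
    rintro r ⟨z, hz, rfl⟩
    set a := z.fst
    set b := z.snd
    have hnormz : ‖a‖ ^ 2 + ‖b‖ ^ 2 = 1 := by
      have := WithLp.prod_norm_sq_eq_of_L2 z
      rw [hz] at this
      simpa using this.symm
    have hpol : (2 : ℂ) * (inner ℂ (T z) z : ℂ) =
        (inner ℂ (Y (a + b)) (a + b) : ℂ) - inner ℂ (Y (a - b)) (a - b) := by
      rw [hinner z]
      simp only [map_add, map_sub, inner_add_left, inner_add_right, inner_sub_left,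
        inner_sub_right]
      ring
    have h1 := inner_le_numRadius Y (a + b)
    have h2 := inner_le_numRadius Y (a - b)
    have hpar : ‖a + b‖ ^ 2 + ‖a - b‖ ^ 2 = 2 * (‖a‖ ^ 2 + ‖b‖ ^ 2) := by
      have := parallelogram_law_with_norm ℂ a b
      nlinarith [this]
    have key : 2 * ‖(inner ℂ (T z) z : ℂ)‖ ≤ numRadius Y * 2 := by
      calc 2 * ‖(inner ℂ (T z) z : ℂ)‖ = ‖(2 : ℂ) * (inner ℂ (T z) z : ℂ)‖ := by
            rw [norm_mul]; simp
        _ = ‖(inner ℂ (Y (a + b)) (a + b) : ℂ) - inner ℂ (Y (a - b)) (a - b)‖ := by rw [hpol]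
        _ ≤ ‖(inner ℂ (Y (a + b)) (a + b) : ℂ)‖ + ‖(inner ℂ (Y (a - b)) (a - b) : ℂ)‖ :=
            norm_sub_le _ _
        _ ≤ numRadius Y * ‖a + b‖ ^ 2 + numRadius Y * ‖a - b‖ ^ 2 := add_le_add h1 h2
        _ = numRadius Y * (‖a + b‖ ^ 2 + ‖a - b‖ ^ 2) := by ring
        _ = numRadius Y * 2 := by rw [hpar, hnormz]; ring
    linarith
  · -- numRadius Y ≤ sSup S_T
    apply Real.sSup_le
    · rintro r ⟨x, hx, rfl⟩
      -- take z = ((√2)⁻¹ • x, (√2)⁻¹ • x)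
      set c : ℝ := (Real.sqrt 2)⁻¹ with hc
      have hc2 : c ^ 2 = 2⁻¹ := by
        rw [hc, inv_pow, Real.sq_sqrt (by norm_num : (0:ℝ) ≤ 2)]
      set z : WithLp 2 (H × H) := (WithLp.equiv 2 (H × H)).symm
        ((c : ℂ) • x, (c : ℂ) • x) with hzdef
      have hzfst : z.fst = (c : ℂ) • x := rfl
      have hzsnd : z.snd = (c : ℂ) • x := rfl
      have hcn : ‖(c : ℂ) • x‖ ^ 2 = 2⁻¹ := by
        rw [norm_smul, hx, mul_one, Complex.norm_real, Real.norm_eq_abs, sq_abs, hc2]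
      have hznorm : ‖z‖ = 1 := by
        have hsq := WithLp.prod_norm_sq_eq_of_L2 z
        rw [hzfst, hzsnd, hcn] at hsq
        have : ‖z‖ ^ 2 = 1 := by rw [hsq]; norm_num
        nlinarith [norm_nonneg z]
      have hval : (inner ℂ (T z) z : ℂ) = inner ℂ (Y x) x := by
        rw [hinner z, hzfst, hzsnd]
        rw [map_smul, inner_smul_left, inner_smul_right]
        have : (starRingEnd ℂ) (c : ℂ) = (c : ℂ) := Complex.conj_ofReal c
        rw [this]
        have hcc : ((c : ℂ)) * ((c:ℂ)) = 2⁻¹ := by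
          rw [← Complex.ofReal_mul, ← sq, hc2]
          norm_num
        have : ((c:ℂ) * ((c:ℂ) * (inner ℂ (Y x) x : ℂ))) = 2⁻¹ * inner ℂ (Y x) x := by
          rw [← mul_assoc, hcc]
        rw [this]
        ring
      have hmem : ‖(inner ℂ (Y x) x : ℂ)‖ ∈
          {r : ℝ | ∃ z : WithLp 2 (H × H), ‖z‖ = 1 ∧ r = ‖(inner ℂ (T z) z : ℂ)‖} :=
        ⟨z, hznorm, by rw [hval]⟩
      refine le_csSup ?_ hmem
      refine ⟨‖T‖, ?_⟩
      rintro r ⟨w, hw, rfl⟩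
      calc ‖(inner ℂ (T w) w : ℂ)‖ ≤ ‖T w‖ * ‖w‖ := norm_inner_le_norm _ _
        _ ≤ ‖T‖ * ‖w‖ * ‖w‖ := by
            have := T.le_opNorm w
            nlinarith [norm_nonneg (T w), norm_nonneg w]
        _ = ‖T‖ := by rw [hw]; ring
    · exact Real.sSup_nonneg (by rintro r ⟨z, hz, rfl⟩; positivity)
end

section
/- Let n ≥ 1 and let D be the n × n complex matrix with (D)_{jk} = 1 if j = k + 1 and 0 otherwise (the lower shift matrix with 1's on the subdiagonal). Then the numerical radius of D, viewed as an operator on the n-dimensional complex Euclidean space, equals cos(π/(n+1)). -/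
noncomputable section
open Finset


def sv (n k : ℕ) : ℝ := Real.sin ((k+1) * (Real.pi/(n+1)))

lemma sv_pos (n k : ℕ) (h : k < n) : 0 < sv n k := by
  apply Real.sin_pos_of_pos_of_lt_pi
  · have : (0:ℝ) < Real.pi / (n+1) := by positivity
    positivity
  · have h1 : ((k:ℝ)+1) < (n:ℝ)+1 := by exact_mod_cast Nat.succ_lt_succ h
    have h2 : (0:ℝ) < (n:ℝ)+1 := by positivity
    calc ((k:ℝ)+1) * (Real.pi/(n+1)) < ((n:ℝ)+1) * (Real.pi/(n+1)) := by
            apply mul_lt_mul_of_pos_right h1; positivity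
      _ = Real.pi := by field_simp
lemma sv_top (n : ℕ) : sv n n = 0 := by
  have h2 : ((n:ℝ)+1) ≠ 0 := by positivity
  unfold sv
  rw [mul_div_cancel₀ _ h2, Real.sin_pi]

lemma sv_rec (n k : ℕ) :
    sv n k + sv n (k+2) = 2 * Real.cos (Real.pi/(n+1)) * sv n (k+1) := by
  unfold sv
  set θ := Real.pi/(n+1)
  have e1 : ((k:ℝ)+2+1) * θ = ((k:ℝ)+1+1)*θ + θ := by ring
  have e2 : ((k:ℝ)+1) * θ = ((k:ℝ)+1+1)*θ - θ := by ring
  push_cast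
  rw [e1, e2, Real.sin_add, Real.sin_sub]
  ring

lemma sv_one (n : ℕ) : sv n 1 = 2 * Real.cos (Real.pi/(n+1)) * sv n 0 := by
  unfold sv
  have : ((1:ℕ):ℝ) + 1 = 2 := by norm_num
  rw [this]
  rw [show (2:ℝ) * (Real.pi/(n+1)) = 2 * ((Real.pi/(n+1))) from rfl, Real.sin_two_mul]
  push_cast
  ring_nf

lemma Fid (n : ℕ) (hn : 1 ≤ n) (a : ℕ → ℝ) :
    ∀ m, m + 1 ≤ n →
    ∑ k ∈ range m, ((sv n (k+1)/sv n k)*(a k)^2 + (sv n k/sv n (k+1))*(a (k+1))^2)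
      = 2*Real.cos (Real.pi/(n+1)) * ∑ k ∈ range (m+1), (a k)^2
        - (sv n (m+1)/sv n m)*(a m)^2 := by
  intro m
  induction m with
  | zero =>
    intro _
    simp [sv_one n, mul_div_assoc, mul_div_cancel_left₀, (sv_pos n 0 hn).ne']
  | succ m ih =>
    intro hm
    have h0 : sv n m ≠ 0 := (sv_pos n m (by omega)).ne'
    have h1 : sv n (m+1) ≠ 0 := (sv_pos n (m+1) (by omega)).ne'
    rw [Finset.sum_range_succ, ih (by omega),
      Finset.sum_range_succ (fun k => a k ^ 2) (m+1)]
    have hr := sv_rec n m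
    simp only [show m+1+1 = m+2 from rfl]
    field_simp
    linear_combination (sv n m * a (m+1)^2) * hr

lemma amgm (p q a b : ℝ) (hp : 0 < p) (hq : 0 < q) :
    a * b ≤ (1/2) * (q/p*a^2 + p/q*b^2) := by
  rw [← sub_nonneg]
  have e : (1/2)*(q/p*a^2+p/q*b^2) - a*b = (q*a-p*b)^2/(2*p*q) := by
    field_simp; ring
  rw [e]; positivity

lemma core_ineq (n : ℕ) (hn : 1 ≤ n) (a : ℕ → ℝ) (ha : ∀ k, 0 ≤ a k) :
    ∑ k ∈ range (n-1), a k * a (k+1)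
      ≤ Real.cos (Real.pi/(n+1)) * ∑ k ∈ range n, (a k)^2 := by
  have hF := Fid n hn a (n-1) (by omega)
  have hlast : sv n (n-1+1) = 0 := by rw [show n-1+1 = n by omega]; exact sv_top n
  rw [hlast, zero_div, zero_mul, sub_zero, show n-1+1 = n by omega] at hF
  have hterm : ∑ k ∈ range (n-1), a k * a (k+1)
      ≤ ∑ k ∈ range (n-1), (1/2) * ((sv n (k+1)/sv n k)*(a k)^2 + (sv n k/sv n (k+1))*(a (k+1))^2) := by
    apply Finset.sum_le_sum
    intro k hk
    have hk' := Finset.mem_range.mp hk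
    exact amgm (sv n k) (sv n (k+1)) (a k) (a (k+1)) (sv_pos n k (by omega)) (sv_pos n (k+1) (by omega))
  rw [← Finset.mul_sum, hF] at hterm
  linarith

lemma core_eq (n : ℕ) (hn : 1 ≤ n) :
    ∑ k ∈ range (n-1), sv n k * sv n (k+1)
      = Real.cos (Real.pi/(n+1)) * ∑ k ∈ range n, (sv n k)^2 := by
  have hF := Fid n hn (sv n) (n-1) (by omega)
  have hlast : sv n (n-1+1) = 0 := by rw [show n-1+1 = n by omega]; exact sv_top n
  rw [hlast, zero_div, zero_mul, sub_zero, show n-1+1 = n by omega] at hF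
  have hterm : ∀ k ∈ range (n-1),
      (sv n (k+1)/sv n k)*(sv n k)^2 + (sv n k/sv n (k+1))*(sv n (k+1))^2
        = 2 * (sv n k * sv n (k+1)) := by
    intro k hk
    have hk' := Finset.mem_range.mp hk
    have h0 := (sv_pos n k (by omega)).ne'
    have h1 := (sv_pos n (k+1) (by omega)).ne'
    field_simp
    ring
  rw [Finset.sum_congr rfl hterm, ← Finset.mul_sum] at hF
  linarith



lemma sum_ite_fin (n m : ℕ) (g : Fin n → ℂ) :
    ∑ j : Fin n, (if (j:ℕ) = m then g j else 0)
      = if h : m < n then g ⟨m, h⟩ else 0 := by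
  split_ifs with h
  · rw [Finset.sum_eq_single (⟨m, h⟩ : Fin n)]
    · simp
    · intro j _ hj
      rw [if_neg]
      simpa [Fin.ext_iff] using hj
    · simp
  · apply Finset.sum_eq_zero
    intro j _
    rw [if_neg]
    intro hj
    exact h (hj ▸ j.isLt)

lemma inner_shift (n : ℕ) (hn : 1 ≤ n) (D : Matrix (Fin n) (Fin n) ℂ)
    (hD : ∀ j k : Fin n, D j k = if (j:ℕ) = (k:ℕ)+1 then 1 else 0)
    (x : EuclideanSpace ℂ (Fin n)) :
    (inner ℂ ((Matrix.toEuclideanCLM (𝕜 := ℂ) D) x) x : ℂ)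
      = ∑ m ∈ Finset.range (n-1),
          (starRingEnd ℂ) (if h : m < n then x ⟨m,h⟩ else 0)
            * (if h : m+1 < n then x ⟨m+1,h⟩ else 0) := by
  set z : ℕ → ℂ := fun m => if h : m < n then x ⟨m,h⟩ else 0 with hz
  have step1 : (inner ℂ ((Matrix.toEuclideanCLM (𝕜 := ℂ) D) x) x : ℂ)
      = ∑ j : Fin n, (starRingEnd ℂ) (∑ k : Fin n, D j k * x k) * x j := by
    rw [PiLp.inner_apply]
    apply Finset.sum_congr rfl
    intro j _
    have : (Matrix.toEuclideanCLM (𝕜 := ℂ) D) x j = ∑ k : Fin n, D j k * x k := by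
      show (Matrix.toLin' D (WithLp.equiv _ _ x)) j = _
      simp [Matrix.toLin'_apply, Matrix.mulVec, dotProduct]
    rw [this, RCLike.inner_apply]
    ring
  rw [step1]
  have step2 : ∀ j : Fin n, (starRingEnd ℂ) (∑ k : Fin n, D j k * x k) * x j
      = ∑ k : Fin n, (if (j:ℕ) = (k:ℕ)+1 then (starRingEnd ℂ) (x k) * x j else 0) := by
    intro j
    rw [map_sum, Finset.sum_mul]
    apply Finset.sum_congr rfl
    intro k _
    rw [hD]
    split_ifs <;> simp
  simp_rw [step2]
  rw [Finset.sum_comm]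
  have step3 : ∀ k : Fin n,
      (∑ j : Fin n, if (j:ℕ) = (k:ℕ)+1 then (starRingEnd ℂ) (x k) * x j else 0)
        = (starRingEnd ℂ) (z k) * z ((k:ℕ)+1) := by
    intro k
    rw [sum_ite_fin n ((k:ℕ)+1) (fun j => (starRingEnd ℂ) (x k) * x j)]
    have hzk : z (k:ℕ) = x k := dif_pos k.isLt
    rw [hzk]
    by_cases h : (k:ℕ)+1 < n
    · simp [hz, h]
    · simp [hz, h]
  simp_rw [step3]
  rw [Fin.sum_univ_eq_sum_range (fun m => (starRingEnd ℂ) (z m) * z (m+1)) n]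
  obtain ⟨p, rfl⟩ : ∃ p, n = p + 1 := ⟨n - 1, by omega⟩
  rw [Finset.sum_range_succ, Nat.add_sub_cancel]
  have hzp : z (p+1) = 0 := by
    rw [hz]; exact dif_neg (by omega)
  rw [hzp, mul_zero, add_zero]
theorem numRadius_lower_shift (n : ℕ) (hn : 1 ≤ n)
    (D : Matrix (Fin n) (Fin n) ℂ)
    (hD : ∀ j k : Fin n, D j k = if (j : ℕ) = (k : ℕ) + 1 then 1 else 0) :
    numRadius (Matrix.toEuclideanCLM (𝕜 := ℂ) D) = Real.cos (Real.pi / (n + 1)) := by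
  set c := Real.cos (Real.pi / (n + 1)) with hc
  have hcnn : 0 ≤ c := by
    apply Real.cos_nonneg_of_mem_Icc
    constructor
    · have : (0:ℝ) ≤ Real.pi / (n+1) := by positivity
      linarith [Real.pi_pos]
    · have h2 : (2:ℝ) ≤ (n:ℝ)+1 := by
        have : (1:ℝ) ≤ (n:ℝ) := by exact_mod_cast hn
        linarith
      calc Real.pi / ((n:ℝ)+1) ≤ Real.pi / 2 := by
            apply div_le_div_of_nonneg_left Real.pi_pos.le (by norm_num) h2
        _ ≤ Real.pi / 2 := le_refl _
  -- upper bound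
  have hub : ∀ r ∈ {r : ℝ | ∃ x : EuclideanSpace ℂ (Fin n), ‖x‖ = 1 ∧
      r = ‖(inner ℂ ((Matrix.toEuclideanCLM (𝕜 := ℂ) D) x) x : ℂ)‖}, r ≤ c := by
    rintro r ⟨x, hx, rfl⟩
    rw [inner_shift n hn D hD x]
    set a : ℕ → ℝ := fun m => ‖(if h : m < n then x ⟨m,h⟩ else 0 : ℂ)‖ with ha
    have hnorm1 : ∑ k ∈ range n, (a k)^2 = 1 := by
      have e1 : ∑ k ∈ range n, (a k)^2 = ∑ i : Fin n, ‖x i‖^2 := by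
        rw [← Fin.sum_univ_eq_sum_range (fun m => (a m)^2) n]
        apply Finset.sum_congr rfl
        intro i _
        simp [ha, i.isLt]
      rw [e1]
      rw [EuclideanSpace.norm_eq] at hx
      have := Real.sqrt_eq_one.mp hx
      simpa using this
    calc ‖∑ m ∈ range (n-1),
          (starRingEnd ℂ) (if h : m < n then x ⟨m,h⟩ else 0)
            * (if h : m+1 < n then x ⟨m+1,h⟩ else 0)‖
        ≤ ∑ m ∈ range (n-1), a m * a (m+1) := by
          refine (norm_sum_le _ _).trans ?_
          apply Finset.sum_le_sum
          intro m _
          rw [norm_mul, RCLike.norm_conj]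
      _ ≤ c * ∑ k ∈ range n, (a k)^2 := core_ineq n hn a (fun k => norm_nonneg _)
      _ = c := by rw [hnorm1, mul_one]
  -- witness
  set N := ∑ k ∈ range n, (sv n k)^2 with hN
  have hNpos : 0 < N := by
    apply Finset.sum_pos'
    · intro k _; positivity
    · exact ⟨0, Finset.mem_range.mpr hn, by have := sv_pos n 0 hn; positivity⟩
  have hsqN : Real.sqrt N ≠ 0 := (Real.sqrt_pos.mpr hNpos).ne'
  set x₀ : EuclideanSpace ℂ (Fin n) := WithLp.toLp 2 (fun j : Fin n =>
    (((Real.sqrt N)⁻¹ * sv n (j:ℕ) : ℝ) : ℂ)) with hx₀def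
  have hx₀app : ∀ j : Fin n, x₀ j = (((Real.sqrt N)⁻¹ * sv n (j:ℕ) : ℝ) : ℂ) :=
    fun j => rfl
  have hx₀norm : ‖x₀‖ = 1 := by
    rw [EuclideanSpace.norm_eq]
    rw [Real.sqrt_eq_one]
    have e1 : ∀ i : Fin n, ‖x₀ i‖^2 = (Real.sqrt N)⁻¹^2 * (sv n (i:ℕ))^2 := by
      intro i
      rw [hx₀app i, Complex.norm_real, Real.norm_eq_abs]
      rw [abs_mul, abs_of_nonneg (by positivity), abs_of_nonneg (sv_pos n i i.isLt).le]
      ring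
    rw [Finset.sum_congr rfl (fun i _ => e1 i), ← Finset.mul_sum,
      Fin.sum_univ_eq_sum_range (fun k => (sv n k)^2) n, ← hN,
      inv_pow, Real.sq_sqrt hNpos.le]
    exact inv_mul_cancel₀ hNpos.ne'
  have hval : (inner ℂ ((Matrix.toEuclideanCLM (𝕜 := ℂ) D) x₀) x₀ : ℂ) = (c : ℂ) := by
    rw [inner_shift n hn D hD x₀]
    have hterm : ∀ m ∈ range (n-1),
        (starRingEnd ℂ) (if h : m < n then x₀ ⟨m,h⟩ else 0)
          * (if h : m+1 < n then x₀ ⟨m+1,h⟩ else 0)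
        = ((((Real.sqrt N)⁻¹)^2 * (sv n m * sv n (m+1)) : ℝ) : ℂ) := by
      intro m hm
      have hm' := Finset.mem_range.mp hm
      rw [dif_pos (show m < n by omega), dif_pos (show m+1 < n by omega),
        hx₀app, hx₀app, Complex.conj_ofReal, ← Complex.ofReal_mul]
      norm_cast
      ring
    rw [Finset.sum_congr rfl hterm, ← Complex.ofReal_sum, ← Finset.mul_sum,
      core_eq n hn, ← hN, inv_pow, Real.sq_sqrt hNpos.le]
    norm_cast
    field_simp
    simp [hc]
  have hmem : c ∈ {r : ℝ | ∃ x : EuclideanSpace ℂ (Fin n), ‖x‖ = 1 ∧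
      r = ‖(inner ℂ ((Matrix.toEuclideanCLM (𝕜 := ℂ) D) x) x : ℂ)‖} :=
    ⟨x₀, hx₀norm, by rw [hval, Complex.norm_real, Real.norm_eq_abs, abs_of_nonneg hcnn]⟩
  unfold numRadius
  apply le_antisymm
  · exact csSup_le ⟨c, hmem⟩ hub
  · exact le_csSup ⟨c, hub⟩ hmem
end
end

section
/- Let H₁ and H₂ be complex Hilbert spaces, X : H₂ → H₁ and Y : H₁ → H₂ bounded linear operators, and let T be the off-diagonal operator matrix on H₁ ⊕ H₂ given by T(x₁, x₂) = (X x₂, Y x₁). Set S = X*X + YY* (an operator on H₂). Then w(T)⁴ ≥ (1/16)‖S‖² + (1/4)c(YX)² + (1/8)m(YXS + S(YX)). -/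
noncomputable def crawford {H : Type*} [NormedAddCommGroup H] [InnerProductSpace ℂ H]
    (T : H →L[ℂ] H) : ℝ :=
  sInf {r : ℝ | ∃ x : H, ‖x‖ = 1 ∧ r = ‖(inner ℂ (T x) x : ℂ)‖}

noncomputable def reOp {H : Type*} [NormedAddCommGroup H] [InnerProductSpace ℂ H]
    [CompleteSpace H] (A : H →L[ℂ] H) : H →L[ℂ] H :=
  (2 : ℂ)⁻¹ • (A + ContinuousLinearMap.adjoint A)

noncomputable def cNum {H : Type*} [NormedAddCommGroup H] [InnerProductSpace ℂ H]
    [CompleteSpace H] (T : H →L[ℂ] H) : ℝ :=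
  ⨅ θ : ℝ, sInf {r : ℝ | ∃ x : H, ‖x‖ = 1 ∧ r = ‖reOp (Complex.exp (θ * Complex.I) • T) x‖}


open ContinuousLinearMap Complex

lemma numRadius_nonneg_s12 {H : Type*} [NormedAddCommGroup H] [InnerProductSpace ℂ H]
    (T : H →L[ℂ] H) : 0 ≤ numRadius T :=
  Real.sSup_nonneg (by rintro r ⟨x, hx, rfl⟩; positivity)

lemma numRadius_bdd {H : Type*} [NormedAddCommGroup H] [InnerProductSpace ℂ H]
    (T : H →L[ℂ] H) :
    BddAbove {r : ℝ | ∃ x : H, ‖x‖ = 1 ∧ r = ‖(inner ℂ (T x) x : ℂ)‖} := by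
  refine ⟨‖T‖, ?_⟩
  rintro r ⟨x, hx, rfl⟩
  calc ‖(inner ℂ (T x) x : ℂ)‖ ≤ ‖T x‖ * ‖x‖ := norm_inner_le_norm _ _
    _ ≤ ‖T‖ * ‖x‖ * ‖x‖ := by
        gcongr; exact T.le_opNorm x
    _ = ‖T‖ := by rw [hx]; ring

lemma le_numRadius {H : Type*} [NormedAddCommGroup H] [InnerProductSpace ℂ H]
    (T : H →L[ℂ] H) {x : H} (hx : ‖x‖ = 1) :
    ‖(inner ℂ (T x) x : ℂ)‖ ≤ numRadius T :=
  le_csSup (numRadius_bdd T) ⟨x, hx, rfl⟩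

section Main
variable {H₁ H₂ : Type*} [NormedAddCommGroup H₁] [InnerProductSpace ℂ H₁]
    [NormedAddCommGroup H₂] [InnerProductSpace ℂ H₂]
    [CompleteSpace H₁] [CompleteSpace H₂]
    (X : H₂ →L[ℂ] H₁) (Y : H₁ →L[ℂ] H₂)
    (T : WithLp 2 (H₁ × H₂) →L[ℂ] WithLp 2 (H₁ × H₂))

-- for d : ℂ, exp(-(arg d) I) * d = |d|
lemma exp_neg_arg_mul (d : ℂ) : Complex.exp ((-Complex.arg d : ℝ) * Complex.I) * d = ‖d‖ := by
  have hne : Complex.exp ((Complex.arg d : ℝ) * Complex.I) ≠ 0 := Complex.exp_ne_zero _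
  rw [show ((-Complex.arg d : ℝ) : ℂ) * Complex.I = -((Complex.arg d : ℝ) * Complex.I) by push_cast; ring,
    Complex.exp_neg, inv_mul_eq_iff_eq_mul₀ hne, mul_comm]
  exact (Complex.norm_mul_exp_arg_mul_I d).symm

lemma inner_sum_le
    (hT : ∀ x : WithLp 2 (H₁ × H₂),
      WithLp.equiv 2 (H₁ × H₂) (T x) =
        (X (WithLp.equiv 2 (H₁ × H₂) x).2, Y (WithLp.equiv 2 (H₁ × H₂) x).1))
    {e : H₁} {f : H₂} (he : ‖e‖ = 1) (hf : ‖f‖ = 1) :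
    ‖(inner ℂ (X f) e : ℂ)‖ + ‖(inner ℂ (Y e) f : ℂ)‖ ≤ 2 * numRadius T := by
  set a : ℂ := inner ℂ (X f) e with ha
  set b : ℂ := inner ℂ (Y e) f with hb
  set d : ℂ := a * (starRingEnd ℂ) b with hd
  set w : ℂ := Complex.exp ((Complex.arg d / 2 : ℝ) * Complex.I) with hw
  have hwn : ‖w‖ = 1 := by
    simp [hw, Complex.norm_exp]
  have hw2 : w * w = Complex.exp ((Complex.arg d : ℝ) * Complex.I) := by
    rw [hw, ← Complex.exp_add]
    congr 1
    push_cast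
    ring
  -- key : re (w * conj a * w * b) ... we need re ⟪w̄a, wb⟫ = |d|
  have hkey : (starRingEnd ℂ) (w * w) * d = ‖d‖ := by
    rw [hw2, ← Complex.exp_conj]
    have : (starRingEnd ℂ) ((Complex.arg d : ℝ) * Complex.I) = (-Complex.arg d : ℝ) * Complex.I := by
      push_cast
      simp
    rw [this, exp_neg_arg_mul]
  -- norm of the combination
  have hcomb : ‖(starRingEnd ℂ) w * a + w * b‖ = ‖a‖ + ‖b‖ := by
    have hsq : ‖(starRingEnd ℂ) w * a + w * b‖ ^ 2 = (‖a‖ + ‖b‖) ^ 2 := by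
      rw [@norm_add_sq ℂ ℂ _ _ _ ((starRingEnd ℂ) w * a) (w * b)]
      have hinner : (inner ℂ ((starRingEnd ℂ) w * a) (w * b) : ℂ) = (starRingEnd ℂ) ((starRingEnd ℂ) (w*w) * d) := by
        simp only [RCLike.inner_apply, hd, map_mul, RingHomCompTriple.comp_apply,
          Complex.conj_conj, RingHom.id_apply]
        ring
      rw [hinner, hkey]
      have h1 : ‖(starRingEnd ℂ) w * a‖ = ‖a‖ := by
        rw [norm_mul, RCLike.norm_conj, hwn, one_mul]
      have h2 : ‖w * b‖ = ‖b‖ := by rw [norm_mul, hwn, one_mul]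
      rw [h1, h2]
      have habs : RCLike.re ((starRingEnd ℂ) ((‖d‖ : ℝ) : ℂ)) = ‖a‖ * ‖b‖ := by
        simp [hd, map_mul]
      rw [habs]; ring
    have h0 : (0:ℝ) ≤ ‖(starRingEnd ℂ) w * a + w * b‖ := norm_nonneg _
    have h0' : (0:ℝ) ≤ ‖a‖ + ‖b‖ := by positivity
    nlinarith
  -- the vector
  set c : ℂ := (((Real.sqrt 2)⁻¹ : ℝ) : ℂ) with hc
  set v : WithLp 2 (H₁ × H₂) := (WithLp.equiv 2 (H₁ × H₂)).symm (c • e, (c * w) • f) with hv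
  have hvf : v.fst = c • e := rfl
  have hvs : v.snd = (c * w) • f := rfl
  have hcn : ‖c‖ = (Real.sqrt 2)⁻¹ := by
    rw [hc, Complex.norm_real, Real.norm_eq_abs, _root_.abs_of_nonneg (by positivity)]
  have hvn : ‖v‖ = 1 := by
    have h2 : ‖v‖ ^ 2 = 1 := by
      rw [WithLp.prod_norm_sq_eq_of_L2, hvf, hvs, norm_smul, norm_smul, norm_mul, hwn, he, hf, hcn]
      have : ((Real.sqrt 2)⁻¹) ^ 2 = 1/2 := by
        rw [← Real.sqrt_inv]
        rw [Real.sq_sqrt (by norm_num)]; norm_num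
      nlinarith [this]
    have := norm_nonneg v
    nlinarith
  -- components of T v
  have hTv1 : (T v).fst = X ((c * w) • f) := by
    have := congrArg Prod.fst (hT v)
    exact this
  have hTv2 : (T v).snd = Y (c • e) := by
    have := congrArg Prod.snd (hT v)
    exact this
  have hinner : (inner ℂ (T v) v : ℂ) = c^2 * ((starRingEnd ℂ) w * a + w * b) := by
    rw [WithLp.prod_inner_apply, WithLp.ofLp_fst, WithLp.ofLp_fst, WithLp.ofLp_snd, WithLp.ofLp_snd, hTv1, hTv2, hvf, hvs]
    rw [map_smul, map_smul, inner_smul_left, inner_smul_right, inner_smul_left, inner_smul_right]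
    rw [← ha, ← hb]
    have hcc : (starRingEnd ℂ) c = c := by rw [hc, Complex.conj_ofReal]
    rw [map_mul, hcc]
    ring
  have hc2 : ‖c^2‖ = 1/2 := by
    rw [norm_pow, hcn]
    rw [← Real.sqrt_inv, Real.sq_sqrt (by norm_num)]; norm_num
  have := le_numRadius T hvn
  rw [hinner, norm_mul, hc2, hcomb] at this
  linarith

lemma normB_le
    (hT : ∀ x : WithLp 2 (H₁ × H₂),
      WithLp.equiv 2 (H₁ × H₂) (T x) =
        (X (WithLp.equiv 2 (H₁ × H₂) x).2, Y (WithLp.equiv 2 (H₁ × H₂) x).1))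
    (θ : ℝ) :
    ‖(Complex.exp ((θ : ℂ) * Complex.I) • X
      + Complex.exp (-(θ : ℂ) * Complex.I) • (ContinuousLinearMap.adjoint Y))‖
      ≤ 2 * numRadius T := by
  set B : H₂ →L[ℂ] H₁ := Complex.exp ((θ : ℂ) * Complex.I) • X
      + Complex.exp (-(θ : ℂ) * Complex.I) • (ContinuousLinearMap.adjoint Y) with hB
  have hw0 : (0:ℝ) ≤ 2 * numRadius T := by
    have := numRadius_nonneg_s12 T; linarith
  -- bound for unit vectors
  have hunit : ∀ g : H₂, ‖g‖ = 1 → ‖B g‖ ≤ 2 * numRadius T := by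
    intro g hg
    by_cases hBg : B g = 0
    · rw [hBg, norm_zero]; exact hw0
    · set e : H₁ := ((‖B g‖ : ℂ))⁻¹ • B g with he
      have hBgn : (0:ℝ) < ‖B g‖ := norm_pos_iff.mpr hBg
      have hen : ‖e‖ = 1 := by
        rw [he, norm_smul, norm_inv, Complex.norm_real, Real.norm_eq_abs,
          _root_.abs_of_nonneg hBgn.le]
        field_simp
      have hBge : (inner ℂ (B g) e : ℂ) = (‖B g‖ : ℂ) := by
        rw [he, inner_smul_right, inner_self_eq_norm_sq_to_K]
        have : ((‖B g‖ : ℂ)) ≠ 0 := by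
          simp only [ne_eq, Complex.ofReal_eq_zero]
          exact hBgn.ne'
        field_simp
        norm_cast
      have hsplit : (inner ℂ (B g) e : ℂ)
          = (starRingEnd ℂ) (Complex.exp ((θ : ℂ) * Complex.I)) * (inner ℂ (X g) e : ℂ)
            + (starRingEnd ℂ) (Complex.exp (-(θ : ℂ) * Complex.I))
              * (starRingEnd ℂ) (inner ℂ (Y e) g : ℂ) := by
        rw [hB]
        simp only [ContinuousLinearMap.add_apply, ContinuousLinearMap.smul_apply,
          inner_add_left, inner_smul_left]
        congr 1
        congr 1
        rw [ContinuousLinearMap.adjoint_inner_left]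
        conv_lhs => rw [← inner_conj_symm]
      have hnorm : ‖B g‖ ≤ ‖(inner ℂ (X g) e : ℂ)‖ + ‖(inner ℂ (Y e) g : ℂ)‖ := by
        have h1 : ‖(inner ℂ (B g) e : ℂ)‖ = ‖B g‖ := by
          rw [hBge, Complex.norm_real, Real.norm_eq_abs, _root_.abs_of_nonneg hBgn.le]
        rw [← h1, hsplit]
        calc ‖_ + _‖ ≤ ‖(starRingEnd ℂ) (Complex.exp ((θ : ℂ) * Complex.I)) * (inner ℂ (X g) e : ℂ)‖
              + ‖(starRingEnd ℂ) (Complex.exp (-(θ : ℂ) * Complex.I)) * (starRingEnd ℂ) (inner ℂ (Y e) g : ℂ)‖ :=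
              norm_add_le _ _
          _ = ‖(inner ℂ (X g) e : ℂ)‖ + ‖(inner ℂ (Y e) g : ℂ)‖ := by
              rw [norm_mul, norm_mul, RCLike.norm_conj, RCLike.norm_conj, RCLike.norm_conj]
              have e1 : ‖Complex.exp ((θ : ℂ) * Complex.I)‖ = 1 := by
                exact Complex.norm_exp_ofReal_mul_I θ
              have e2 : ‖Complex.exp (-(θ : ℂ) * Complex.I)‖ = 1 := by
                rw [show -(θ : ℂ) * Complex.I = ((-θ : ℝ) : ℂ) * Complex.I by push_cast; ring]
                exact Complex.norm_exp_ofReal_mul_I (-θ)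
              rw [e1, e2, one_mul, one_mul]
      exact hnorm.trans (inner_sum_le X Y T hT hen hg)
  refine ContinuousLinearMap.opNorm_le_bound B hw0 (fun f => ?_)
  by_cases hf : f = 0
  · simp [hf]
  · have hfn : (0:ℝ) < ‖f‖ := norm_pos_iff.mpr hf
    set g : H₂ := ((‖f‖ : ℂ))⁻¹ • f with hg
    have hgn : ‖g‖ = 1 := by
      rw [hg, norm_smul, norm_inv, Complex.norm_real, Real.norm_eq_abs,
        _root_.abs_of_nonneg hfn.le]
      field_simp
    have hfg : f = (‖f‖ : ℂ) • g := by
      rw [hg, smul_smul]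
      have : ((‖f‖ : ℂ)) ≠ 0 := by
        simp only [ne_eq, Complex.ofReal_eq_zero]; exact hfn.ne'
      rw [mul_inv_cancel₀ this, one_smul]
    calc ‖B f‖ = ‖f‖ * ‖B g‖ := by
          conv_lhs => rw [hfg]
          rw [map_smul, norm_smul, Complex.norm_real, Real.norm_eq_abs,
            _root_.abs_of_nonneg hfn.le]
      _ ≤ ‖f‖ * (2 * numRadius T) := by
          exact mul_le_mul_of_nonneg_left (hunit g hgn) hfn.le
      _ = 2 * numRadius T * ‖f‖ := by ring

lemma conj_exp_mul_I (t : ℝ) :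
    (starRingEnd ℂ) (Complex.exp ((t : ℂ) * Complex.I)) = Complex.exp (-(t : ℂ) * Complex.I) := by
  rw [← Complex.exp_conj]
  congr 1
  simp [Complex.conj_ofReal]

lemma adjB_comp_B (θ : ℝ) :
    ContinuousLinearMap.adjoint (Complex.exp ((θ : ℂ) * Complex.I) • X
        + Complex.exp (-(θ : ℂ) * Complex.I) • (ContinuousLinearMap.adjoint Y))
      ∘L (Complex.exp ((θ : ℂ) * Complex.I) • X
        + Complex.exp (-(θ : ℂ) * Complex.I) • (ContinuousLinearMap.adjoint Y))
      = ((ContinuousLinearMap.adjoint X).comp X + Y.comp (ContinuousLinearMap.adjoint Y))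
        + Complex.exp (((2 * θ : ℝ) : ℂ) * Complex.I) • (Y.comp X)
        + Complex.exp ((((-(2 * θ)) : ℝ) : ℂ) * Complex.I)
            • ContinuousLinearMap.adjoint (Y.comp X) := by
  have hneg : -(θ : ℂ) * Complex.I = ((-θ : ℝ) : ℂ) * Complex.I := by push_cast; ring
  have c1 : (starRingEnd ℂ) (Complex.exp ((θ : ℂ) * Complex.I))
      = Complex.exp (-(θ : ℂ) * Complex.I) := conj_exp_mul_I θ
  have c2 : (starRingEnd ℂ) (Complex.exp (-(θ : ℂ) * Complex.I))
      = Complex.exp ((θ : ℂ) * Complex.I) := by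
    rw [hneg, conj_exp_mul_I (-θ)]
    congr 1
    push_cast
    ring
  have hadj : ContinuousLinearMap.adjoint (Complex.exp ((θ : ℂ) * Complex.I) • X
        + Complex.exp (-(θ : ℂ) * Complex.I) • (ContinuousLinearMap.adjoint Y))
      = Complex.exp (-(θ : ℂ) * Complex.I) • (ContinuousLinearMap.adjoint X)
        + Complex.exp ((θ : ℂ) * Complex.I) • Y := by
    rw [map_add, map_smulₛₗ, map_smulₛₗ, ContinuousLinearMap.adjoint_adjoint, c1, c2]
  rw [hadj]
  have m1 : Complex.exp (-(θ : ℂ) * Complex.I) * Complex.exp ((θ : ℂ) * Complex.I) = 1 := by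
    rw [← Complex.exp_add, show -(θ : ℂ) * Complex.I + (θ : ℂ) * Complex.I = 0 by ring,
      Complex.exp_zero]
  have m1' : Complex.exp ((θ : ℂ) * Complex.I) * Complex.exp (-(θ : ℂ) * Complex.I) = 1 := by
    rw [mul_comm]; exact m1
  have m2 : Complex.exp ((θ : ℂ) * Complex.I) * Complex.exp ((θ : ℂ) * Complex.I)
      = Complex.exp (((2 * θ : ℝ) : ℂ) * Complex.I) := by
    rw [← Complex.exp_add]; congr 1; push_cast; ring
  have m3 : Complex.exp (-(θ : ℂ) * Complex.I) * Complex.exp (-(θ : ℂ) * Complex.I)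
      = Complex.exp ((((-(2 * θ)) : ℝ) : ℂ) * Complex.I) := by
    rw [← Complex.exp_add]; congr 1; push_cast; ring
  rw [ContinuousLinearMap.add_comp, ContinuousLinearMap.smul_comp, ContinuousLinearMap.smul_comp,
    ContinuousLinearMap.comp_add, ContinuousLinearMap.comp_add,
    ContinuousLinearMap.comp_smul, ContinuousLinearMap.comp_smul,
    ContinuousLinearMap.comp_smul, ContinuousLinearMap.comp_smul,
    ContinuousLinearMap.adjoint_comp]
  simp only [smul_add, smul_smul, m1, m1', m2, m3, one_smul]
  abel

set_option maxHeartbeats 1000000 in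
lemma key_ineq
    (hT : ∀ x : WithLp 2 (H₁ × H₂),
      WithLp.equiv 2 (H₁ × H₂) (T x) =
        (X (WithLp.equiv 2 (H₁ × H₂) x).2, Y (WithLp.equiv 2 (H₁ × H₂) x).1))
    (S : H₂ →L[ℂ] H₂)
    (hS : S = (ContinuousLinearMap.adjoint X).comp X + Y.comp (ContinuousLinearMap.adjoint Y))
    {x : H₂} (hx : ‖x‖ = 1) :
    ‖S x‖ ^ 2 + 4 * (cNum (Y.comp X)) ^ 2
        + 2 * crawford ((Y.comp X).comp S + S.comp (Y.comp X))
      ≤ 16 * (numRadius T) ^ 4 := by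
  set A : H₂ →L[ℂ] H₂ := Y.comp X with hA
  set P : H₂ →L[ℂ] H₂ := A.comp S + S.comp A with hP
  set wT : ℝ := numRadius T with hwT
  have hw0 : 0 ≤ wT := numRadius_nonneg_s12 T
  -- nonnegativity of cNum
  have hbddθ : ∀ θ : ℝ, (0:ℝ) ≤ sInf {r : ℝ | ∃ y : H₂, ‖y‖ = 1 ∧
      r = ‖reOp (Complex.exp (θ * Complex.I) • A) y‖} :=
    fun θ => Real.sInf_nonneg (by rintro r ⟨y, hy, rfl⟩; positivity)
  have hcA0 : 0 ≤ cNum A := Real.iInf_nonneg hbddθ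
  have hcA_le : ∀ (θ : ℝ), cNum A ≤ ‖reOp (Complex.exp ((θ : ℂ) * Complex.I) • A) x‖ := by
    intro θ
    have h1 : cNum A ≤ sInf {r : ℝ | ∃ y : H₂, ‖y‖ = 1 ∧
        r = ‖reOp (Complex.exp (θ * Complex.I) • A) y‖} :=
      ciInf_le ⟨0, by rintro r ⟨θ', rfl⟩; exact hbddθ θ'⟩ θ
    exact h1.trans (csInf_le ⟨0, by rintro r ⟨y, hy, rfl⟩; positivity⟩ ⟨x, hx, rfl⟩)
  set d : ℂ := inner ℂ x (P x) with hd
  set φ : ℝ := -Complex.arg d with hφ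
  have hud : Complex.exp ((φ : ℂ) * Complex.I) * d = ‖d‖ := by
    rw [hφ]; exact exp_neg_arg_mul d
  set u : ℂ := Complex.exp ((φ : ℂ) * Complex.I) with hu
  have hconj : (starRingEnd ℂ) u = Complex.exp (-(φ : ℂ) * Complex.I) := conj_exp_mul_I φ
  set R : H₂ →L[ℂ] H₂ := u • A + Complex.exp (-(φ : ℂ) * Complex.I)
      • (ContinuousLinearMap.adjoint A) with hR
  -- Step 1 : ‖(S+R) x‖ ≤ 4 wT²
  have hBB := adjB_comp_B X Y (φ / 2)
  have h2φ : (2 * (φ / 2) : ℝ) = φ := by ring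
  rw [h2φ] at hBB
  have hnegφ : ((-φ : ℝ) : ℂ) * Complex.I = -(φ : ℂ) * Complex.I := by push_cast; ring
  rw [hnegφ] at hBB
  have hBB' : ContinuousLinearMap.adjoint (Complex.exp (((φ/2 : ℝ) : ℂ) * Complex.I) • X
        + Complex.exp (-((φ/2 : ℝ) : ℂ) * Complex.I) • (ContinuousLinearMap.adjoint Y))
      ∘L (Complex.exp (((φ/2 : ℝ) : ℂ) * Complex.I) • X
        + Complex.exp (-((φ/2 : ℝ) : ℂ) * Complex.I) • (ContinuousLinearMap.adjoint Y))
      = S + R := by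
    rw [hBB, hR, ← hS, hu, ← hA, add_assoc]
  have hstep1 : ‖(S + R) x‖ ≤ 4 * wT ^ 2 := by
    have hBle := normB_le X Y T hT (φ / 2)
    calc ‖(S + R) x‖
        = ‖(ContinuousLinearMap.adjoint (Complex.exp (((φ/2 : ℝ) : ℂ) * Complex.I) • X
            + Complex.exp (-((φ/2 : ℝ) : ℂ) * Complex.I) • (ContinuousLinearMap.adjoint Y))
          ∘L (Complex.exp (((φ/2 : ℝ) : ℂ) * Complex.I) • X
            + Complex.exp (-((φ/2 : ℝ) : ℂ) * Complex.I) • (ContinuousLinearMap.adjoint Y))) x‖ := by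
          rw [hBB']
      _ ≤ ‖ContinuousLinearMap.adjoint (Complex.exp (((φ/2 : ℝ) : ℂ) * Complex.I) • X
            + Complex.exp (-((φ/2 : ℝ) : ℂ) * Complex.I) • (ContinuousLinearMap.adjoint Y))
          ∘L (Complex.exp (((φ/2 : ℝ) : ℂ) * Complex.I) • X
            + Complex.exp (-((φ/2 : ℝ) : ℂ) * Complex.I) • (ContinuousLinearMap.adjoint Y))‖ * ‖x‖ :=
          ContinuousLinearMap.le_opNorm _ _
      _ = ‖(Complex.exp (((φ/2 : ℝ) : ℂ) * Complex.I) • X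
            + Complex.exp (-((φ/2 : ℝ) : ℂ) * Complex.I) • (ContinuousLinearMap.adjoint Y))‖
          * ‖(Complex.exp (((φ/2 : ℝ) : ℂ) * Complex.I) • X
            + Complex.exp (-((φ/2 : ℝ) : ℂ) * Complex.I) • (ContinuousLinearMap.adjoint Y))‖ := by
          rw [ContinuousLinearMap.norm_adjoint_comp_self, hx, mul_one]
      _ ≤ (2 * wT) * (2 * wT) := by
          exact mul_le_mul hBle hBle (norm_nonneg _) (by linarith)
      _ = 4 * wT ^ 2 := by ring
  -- Step 2 : expansion
  have hadd : (S + R) x = S x + R x := rfl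
  have hexp : ‖(S + R) x‖ ^ 2
      = ‖S x‖ ^ 2 + 2 * RCLike.re (inner ℂ (S x) (R x) : ℂ) + ‖R x‖ ^ 2 := by
    rw [hadd]; exact norm_add_sq _ _
  -- Step 3 : ‖R x‖ bound from cNum
  have hreop : R = (2 : ℂ) • reOp (u • A) := by
    have hadjuA : ContinuousLinearMap.adjoint (u • A)
        = Complex.exp (-(φ : ℂ) * Complex.I) • ContinuousLinearMap.adjoint A := by
      rw [map_smulₛₗ, hconj]
    rw [reOp, hadjuA, hR, smul_smul, show (2 : ℂ) * (2 : ℂ)⁻¹ = 1 by norm_num, one_smul]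
  have hRx : ‖R x‖ = 2 * ‖reOp (u • A) x‖ := by
    rw [hreop]
    rw [ContinuousLinearMap.smul_apply, norm_smul]
    norm_num
  have hRx2 : 4 * (cNum A) ^ 2 ≤ ‖R x‖ ^ 2 := by
    have := hcA_le φ
    rw [← hu] at this
    rw [hRx]
    nlinarith [this, hcA0]
  -- Step 4 : cross term
  have hSadj : ContinuousLinearMap.adjoint S = S := by
    rw [hS]
    rw [map_add, ContinuousLinearMap.adjoint_comp, ContinuousLinearMap.adjoint_comp,
      ContinuousLinearMap.adjoint_adjoint, ContinuousLinearMap.adjoint_adjoint]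
  have hSsym : ∀ p q : H₂, (inner ℂ (S p) q : ℂ) = inner ℂ p (S q) := by
    intro p q
    conv_lhs => rw [← hSadj]
    exact ContinuousLinearMap.adjoint_inner_left S q p
  have hcross : (inner ℂ (S x) (R x) : ℂ) + (starRingEnd ℂ) (inner ℂ (S x) (R x) : ℂ)
      = 2 * (‖d‖ : ℝ) := by
    have h1 : (inner ℂ (S x) (R x) : ℂ)
        = u * (inner ℂ (S x) (A x)) + (starRingEnd ℂ) u * (inner ℂ (S x) ((ContinuousLinearMap.adjoint A) x)) := by
      rw [hR, hconj]
      rw [ContinuousLinearMap.add_apply, ContinuousLinearMap.smul_apply,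
        ContinuousLinearMap.smul_apply, inner_add_right, inner_smul_right, inner_smul_right]
    have h2 : (starRingEnd ℂ) (inner ℂ (S x) (R x) : ℂ)
        = (starRingEnd ℂ) u * (inner ℂ (A x) (S x)) + u * (inner ℂ ((ContinuousLinearMap.adjoint A) x) (S x)) := by
      rw [h1, map_add, map_mul, map_mul, Complex.conj_conj, inner_conj_symm, inner_conj_symm]
    rw [h2, h1]
    have e1 : (inner ℂ (S x) (A x) : ℂ) = inner ℂ x (S (A x)) := hSsym x (A x)
    have e2 : (inner ℂ ((ContinuousLinearMap.adjoint A) x) (S x) : ℂ) = inner ℂ x (A (S x)) :=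
      ContinuousLinearMap.adjoint_inner_left A (S x) x
    have e3 : (inner ℂ (A x) (S x) : ℂ) = (starRingEnd ℂ) (inner ℂ (S x) (A x) : ℂ) :=
      (inner_conj_symm _ _).symm
    have e4 : (inner ℂ (S x) ((ContinuousLinearMap.adjoint A) x) : ℂ)
        = (starRingEnd ℂ) (inner ℂ ((ContinuousLinearMap.adjoint A) x) (S x) : ℂ) :=
      (inner_conj_symm _ _).symm
    have hdP : (inner ℂ x (S (A x)) : ℂ) + inner ℂ x (A (S x)) = d := by
      simp only [hd, hP, hA, ContinuousLinearMap.add_apply, ContinuousLinearMap.comp_apply,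
        inner_add_right]
      ring
    have hud' : u * d = (‖d‖ : ℝ) := by rw [hu]; exact hud
    calc u * (inner ℂ (S x) (A x) : ℂ) + (starRingEnd ℂ) u * (inner ℂ (S x) ((ContinuousLinearMap.adjoint A) x))
          + ((starRingEnd ℂ) u * (inner ℂ (A x) (S x)) + u * (inner ℂ ((ContinuousLinearMap.adjoint A) x) (S x)))
        = u * ((inner ℂ (S x) (A x) : ℂ) + inner ℂ ((ContinuousLinearMap.adjoint A) x) (S x))
          + (starRingEnd ℂ) u * ((inner ℂ (S x) ((ContinuousLinearMap.adjoint A) x) : ℂ) + inner ℂ (A x) (S x)) := by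
          ring
      _ = u * d + (starRingEnd ℂ) u * (starRingEnd ℂ) d := by
          have hsum1 : (inner ℂ (S x) (A x) : ℂ)
              + inner ℂ ((ContinuousLinearMap.adjoint A) x) (S x) = d := by
            rw [e1, e2]; exact hdP
          have hsum2 : (inner ℂ (S x) ((ContinuousLinearMap.adjoint A) x) : ℂ)
              + inner ℂ (A x) (S x) = (starRingEnd ℂ) d := by
            rw [e4, e3, ← map_add]
            congr 1
            rw [add_comm]
            exact hsum1
          rw [hsum1, hsum2]
      _ = u * d + (starRingEnd ℂ) (u * d) := by rw [map_mul]
      _ = 2 * (‖d‖ : ℝ) := by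
          rw [hud', Complex.conj_ofReal]
          ring
  -- crawford bound
  have hmP_le : crawford P ≤ ‖d‖ := by
    have h1 : crawford P ≤ ‖(inner ℂ (P x) x : ℂ)‖ :=
      csInf_le ⟨0, by rintro r ⟨y, hy, rfl⟩; positivity⟩ ⟨x, hx, rfl⟩
    have hPx : ‖(inner ℂ (P x) x : ℂ)‖ = ‖d‖ := by
      rw [← inner_conj_symm (P x) x, RCLike.norm_conj, ← hd]
    rw [hPx] at h1
    exact h1
  -- real part
  have hre : RCLike.re (inner ℂ (S x) (R x) : ℂ) = ‖d‖ := by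
    have h2 : (inner ℂ (S x) (R x) : ℂ) + (starRingEnd ℂ) (inner ℂ (S x) (R x) : ℂ)
        = ((2 * Complex.re (inner ℂ (S x) (R x) : ℂ) : ℝ) : ℂ) := Complex.add_conj _
    rw [h2, show (2 : ℂ) * ((‖d‖ : ℝ) : ℂ) = ((2 * ‖d‖ : ℝ) : ℂ) by
      push_cast; ring] at hcross
    have h3 := Complex.ofReal_inj.mp hcross
    have h4 : RCLike.re (inner ℂ (S x) (R x) : ℂ) = Complex.re (inner ℂ (S x) (R x) : ℂ) := rfl
    rw [h4]
    linarith
  -- combine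
  calc ‖S x‖ ^ 2 + 4 * (cNum A) ^ 2 + 2 * crawford P
      ≤ ‖S x‖ ^ 2 + ‖R x‖ ^ 2 + 2 * ‖d‖ := by
        have := hmP_le; linarith [hRx2]
    _ = ‖(S + R) x‖ ^ 2 := by rw [hexp, hre]; ring
    _ ≤ 16 * wT ^ 4 := by nlinarith [hstep1, norm_nonneg ((S + R) x), hw0]

theorem numRadius_offdiag_pow_four_lower'
    (hT : ∀ x : WithLp 2 (H₁ × H₂),
      WithLp.equiv 2 (H₁ × H₂) (T x) =
        (X (WithLp.equiv 2 (H₁ × H₂) x).2, Y (WithLp.equiv 2 (H₁ × H₂) x).1))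
    (S : H₂ →L[ℂ] H₂)
    (hS : S = (ContinuousLinearMap.adjoint X).comp X + Y.comp (ContinuousLinearMap.adjoint Y)) :
    (numRadius T) ^ 4 ≥ (1 / 16 : ℝ) * ‖S‖ ^ 2 + (1 / 4 : ℝ) * (cNum (Y.comp X)) ^ 2
      + (1 / 8 : ℝ) * crawford ((Y.comp X).comp S + S.comp (Y.comp X)) := by
  by_cases hex : ∃ x : H₂, ‖x‖ = 1
  · obtain ⟨x₀, hx₀⟩ := hex
    have key : ∀ x : H₂, ‖x‖ = 1 →
        ‖S x‖ ^ 2 + 4 * (cNum (Y.comp X)) ^ 2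
            + 2 * crawford ((Y.comp X).comp S + S.comp (Y.comp X))
          ≤ 16 * (numRadius T) ^ 4 :=
      fun x hx => key_ineq X Y T hT S hS hx
    set wT : ℝ := numRadius T with hwT
    set cA : ℝ := cNum (Y.comp X) with hcA
    set mP : ℝ := crawford ((Y.comp X).comp S + S.comp (Y.comp X)) with hmP
    have hK0 : 0 ≤ 16 * wT ^ 4 - 4 * cA ^ 2 - 2 * mP := by
      have := key x₀ hx₀
      nlinarith [sq_nonneg ‖S x₀‖]
    have hSK : ‖S‖ ≤ Real.sqrt (16 * wT ^ 4 - 4 * cA ^ 2 - 2 * mP) := by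
      refine ContinuousLinearMap.opNorm_le_bound S (Real.sqrt_nonneg _) (fun y => ?_)
      by_cases hy : y = 0
      · simp [hy]
      · have hyn : (0:ℝ) < ‖y‖ := norm_pos_iff.mpr hy
        set g : H₂ := ((‖y‖ : ℂ))⁻¹ • y with hg
        have hgn : ‖g‖ = 1 := by
          rw [hg, norm_smul, norm_inv, Complex.norm_real, Real.norm_eq_abs,
            _root_.abs_of_nonneg hyn.le]
          field_simp
        have hyne : ((‖y‖ : ℂ)) ≠ 0 := by
          simp only [ne_eq, Complex.ofReal_eq_zero]
          exact hyn.ne'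
        have hyg : y = (‖y‖ : ℂ) • g := by
          rw [hg, smul_smul, mul_inv_cancel₀ hyne, one_smul]
        have h1 : ‖S g‖ ≤ Real.sqrt (16 * wT ^ 4 - 4 * cA ^ 2 - 2 * mP) := by
          apply Real.le_sqrt_of_sq_le
          have := key g hgn
          linarith
        calc ‖S y‖ = ‖y‖ * ‖S g‖ := by
              conv_lhs => rw [hyg]
              rw [map_smul, norm_smul, Complex.norm_real, Real.norm_eq_abs,
                _root_.abs_of_nonneg hyn.le]
          _ ≤ Real.sqrt (16 * wT ^ 4 - 4 * cA ^ 2 - 2 * mP) * ‖y‖ := by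
              rw [mul_comm]
              exact mul_le_mul_of_nonneg_right h1 hyn.le
    have hS2 : ‖S‖ ^ 2 ≤ 16 * wT ^ 4 - 4 * cA ^ 2 - 2 * mP := by
      nlinarith [Real.sq_sqrt hK0, hSK, norm_nonneg S,
        Real.sqrt_nonneg (16 * wT ^ 4 - 4 * cA ^ 2 - 2 * mP)]
    rw [ge_iff_le]
    linarith
  · have hSn : ‖S‖ = 0 := by
      have hz : S = 0 := by
        ext y
        by_cases hy : y = 0
        · rw [hy]; simp
        · exact absurd ⟨(‖y‖⁻¹ : ℝ) • y, by
            have hyn : (0:ℝ) < ‖y‖ := norm_pos_iff.mpr hy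
            rw [norm_smul, Real.norm_eq_abs, _root_.abs_of_nonneg (inv_nonneg.mpr hyn.le)]
            field_simp⟩ hex
      rw [hz]
      simp
    have hcraw : crawford ((Y.comp X).comp S + S.comp (Y.comp X)) = 0 := by
      unfold crawford
      have hempt : {r : ℝ | ∃ x : H₂, ‖x‖ = 1 ∧
          r = ‖(inner ℂ (((Y.comp X).comp S + S.comp (Y.comp X)) x) x : ℂ)‖} = ∅ := by
        apply Set.eq_empty_iff_forall_notMem.mpr
        rintro r ⟨x, hx, -⟩
        exact hex ⟨x, hx⟩
      rw [hempt]
      exact Real.sInf_empty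
    have hcnum : cNum (Y.comp X) = 0 := by
      unfold cNum
      have hz : ∀ θ : ℝ, sInf {r : ℝ | ∃ x : H₂, ‖x‖ = 1 ∧
          r = ‖reOp (Complex.exp (θ * Complex.I) • (Y.comp X)) x‖} = 0 := by
        intro θ
        have hempt : {r : ℝ | ∃ x : H₂, ‖x‖ = 1 ∧
            r = ‖reOp (Complex.exp (θ * Complex.I) • (Y.comp X)) x‖} = ∅ := by
          apply Set.eq_empty_iff_forall_notMem.mpr
          rintro r ⟨x, hx, -⟩
          exact hex ⟨x, hx⟩
        rw [hempt]
        exact Real.sInf_empty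
      calc (⨅ θ : ℝ, sInf {r : ℝ | ∃ x : H₂, ‖x‖ = 1 ∧
              r = ‖reOp (Complex.exp (θ * Complex.I) • (Y.comp X)) x‖})
          = ⨅ _ : ℝ, (0:ℝ) := iInf_congr hz
        _ = 0 := ciInf_const
    rw [hcraw, hcnum, hSn]
    norm_num
    positivity

end Main

theorem numRadius_offdiag_pow_four_lower
    {H₁ H₂ : Type*} [NormedAddCommGroup H₁] [InnerProductSpace ℂ H₁]
    [NormedAddCommGroup H₂] [InnerProductSpace ℂ H₂]
    [CompleteSpace H₁] [CompleteSpace H₂]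
    (X : H₂ →L[ℂ] H₁) (Y : H₁ →L[ℂ] H₂)
    (T : WithLp 2 (H₁ × H₂) →L[ℂ] WithLp 2 (H₁ × H₂))
    (hT : ∀ x : WithLp 2 (H₁ × H₂),
      WithLp.equiv 2 (H₁ × H₂) (T x) =
        (X (WithLp.equiv 2 (H₁ × H₂) x).2, Y (WithLp.equiv 2 (H₁ × H₂) x).1))
    (S : H₂ →L[ℂ] H₂)
    (hS : S = (ContinuousLinearMap.adjoint X).comp X + Y.comp (ContinuousLinearMap.adjoint Y)) :
    (numRadius T) ^ 4 ≥ (1 / 16 : ℝ) * ‖S‖ ^ 2 + (1 / 4 : ℝ) * (cNum (Y.comp X)) ^ 2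
      + (1 / 8 : ℝ) * crawford ((Y.comp X).comp S + S.comp (Y.comp X)) :=
  numRadius_offdiag_pow_four_lower' X Y T hT S hS
end

section
/- Let H be a complex Hilbert space and X : H → H a bounded linear operator. Set R = X*X + XX*. Then w(X)⁴ ≥ (1/16)‖R‖² + (1/4)c(X²)² + (1/8)m(X²R + RX²). -/
section Aux

variable {H : Type*} [NormedAddCommGroup H] [InnerProductSpace ℂ H] [CompleteSpace H]

local notation "⟪" x ", " y "⟫" => @inner ℂ _ _ x y

lemma aux_norm_le_of_inner {A : H →L[ℂ] H} (hA : IsSelfAdjoint A) {M : ℝ} (hM : 0 ≤ M)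
    (h : ∀ x : H, ‖x‖ = 1 → ‖(⟪A x, x⟫ : ℂ)‖ ≤ M) : ‖A‖ ≤ M := by
  have h' : ∀ x : H, ‖(⟪A x, x⟫ : ℂ)‖ ≤ M * ‖x‖ ^ 2 := by
    intro x
    rcases eq_or_ne x 0 with rfl | hx
    · simp
    · have hnx : ‖x‖ ≠ 0 := norm_ne_zero_iff.mpr hx
      set u : H := ((‖x‖⁻¹ : ℝ) : ℂ) • x with hu
      have hu1 : ‖u‖ = 1 := by
        rw [hu, norm_smul]
        simp [inv_mul_cancel₀ hnx]
      have hxu : x = ((‖x‖ : ℝ) : ℂ) • u := by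
        rw [hu, smul_smul]
        norm_cast
        rw [mul_inv_cancel₀ hnx]
        norm_num
      have hinner : (⟪A x, x⟫ : ℂ) = ((‖x‖ ^ 2 : ℝ) : ℂ) * ⟪A u, u⟫ := by
        conv_lhs => rw [hxu]
        rw [map_smul, inner_smul_left, inner_smul_right, Complex.conj_ofReal]
        push_cast
        ring
      rw [hinner, norm_mul]
      have h2 : ‖(((‖x‖ ^ 2 : ℝ)) : ℂ)‖ = ‖x‖ ^ 2 := by
        rw [Complex.norm_real, Real.norm_eq_abs, _root_.abs_of_nonneg (sq_nonneg _)]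
      rw [h2, mul_comm]
      exact mul_le_mul (h u hu1) le_rfl (by positivity) hM
  have hre : ∀ x y : H, Complex.re ⟪A x, y⟫ ≤ (M / 2) * (‖x‖ ^ 2 + ‖y‖ ^ 2) := by
    intro x y
    have hsym : ∀ a b : H, ⟪A b, a⟫ = (starRingEnd ℂ) ⟪A a, b⟫ := by
      intro a b
      rw [← inner_conj_symm]
      congr 1
      calc ⟪a, A b⟫ = ⟪(ContinuousLinearMap.adjoint A) a, b⟫ := by
            rw [ContinuousLinearMap.adjoint_inner_left]
        _ = ⟪A a, b⟫ := by rw [hA.adjoint_eq]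
    have e1 : (⟪A (x + y), x + y⟫ : ℂ) - ⟪A (x - y), x - y⟫
        = 2 * ⟪A x, y⟫ + 2 * ⟪A y, x⟫ := by
      simp only [map_add, map_sub, inner_add_left, inner_add_right, inner_sub_left,
        inner_sub_right]
      ring
    have ecalc : ∀ a : ℂ, (2 * a + 2 * (starRingEnd ℂ) a).re = 4 * a.re := by
      intro a
      simp [Complex.add_re, Complex.mul_re]
      ring
    have e2 : Complex.re ((⟪A (x + y), x + y⟫ : ℂ) - ⟪A (x - y), x - y⟫)
        = 4 * Complex.re ⟪A x, y⟫ := by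
      rw [e1, hsym x y]
      exact ecalc _
    have b1 : Complex.re (⟪A (x + y), x + y⟫ : ℂ) ≤ M * ‖x + y‖ ^ 2 :=
      le_trans (Complex.re_le_norm _) (h' _)
    have b2 : -(M * ‖x - y‖ ^ 2) ≤ Complex.re (⟪A (x - y), x - y⟫ : ℂ) := by
      have := (abs_le.mp (le_trans (Complex.abs_re_le_norm _) (h' (x - y)))).1
      linarith
    have par : ‖x + y‖ ^ 2 + ‖x - y‖ ^ 2 = 2 * (‖x‖ ^ 2 + ‖y‖ ^ 2) := by
      have := parallelogram_law_with_norm ℂ x y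
      nlinarith [this]
    have hmain : 4 * Complex.re ⟪A x, y⟫ ≤ M * (‖x + y‖ ^ 2 + ‖x - y‖ ^ 2) := by
      rw [← e2, Complex.sub_re]
      nlinarith [b1, b2]
    rw [par] at hmain
    linarith
  refine A.opNorm_le_bound hM fun x => ?_
  rcases eq_or_ne (A x) 0 with hAx | hAx
  · rw [hAx, norm_zero]; positivity
  · have hAxn : (0:ℝ) < ‖A x‖ := norm_pos_iff.mpr hAx
    have hx0 : (0:ℝ) < ‖x‖ := by
      rcases eq_or_ne x 0 with rfl | hx
      · exact absurd (map_zero A) hAx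
      · exact norm_pos_iff.mpr hx
    set y : H := (((‖x‖ / ‖A x‖ : ℝ)) : ℂ) • A x with hy
    have h1 : Complex.re ⟪A x, y⟫ = ‖x‖ * ‖A x‖ := by
      have : (⟪A x, y⟫ : ℂ) = ((‖x‖ / ‖A x‖ * ‖A x‖ ^ 2 : ℝ) : ℂ) := by
        rw [hy, inner_smul_right, inner_self_eq_norm_sq_to_K]
        simp only [RCLike.ofReal_alg, Complex.real_smul, Complex.coe_algebraMap]
        push_cast
        ring
      rw [this, Complex.ofReal_re]
      field_simp
    have h2 : ‖y‖ ^ 2 = ‖x‖ ^ 2 := by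
      rw [hy, norm_smul, Complex.norm_real, Real.norm_eq_abs, abs_div,
        _root_.abs_of_nonneg (norm_nonneg x), _root_.abs_of_nonneg (norm_nonneg (A x))]
      field_simp
    have := hre x y
    rw [h1, h2] at this
    nlinarith [hx0, this]

lemma aux_reOp_isSelfAdjoint (T : H →L[ℂ] H) : IsSelfAdjoint (reOp T) := by
  rw [IsSelfAdjoint, reOp, star_smul, star_add, ContinuousLinearMap.star_eq_adjoint,
    ContinuousLinearMap.star_eq_adjoint, ContinuousLinearMap.adjoint_adjoint]
  have : star ((2:ℂ)⁻¹) = (2:ℂ)⁻¹ := by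
    simp [star_inv₀]
  rw [this, add_comm]

end Aux

set_option maxHeartbeats 1000000 in
theorem numRadius_pow_four_lower
    {H : Type*} [NormedAddCommGroup H] [InnerProductSpace ℂ H] [CompleteSpace H]
    (X : H →L[ℂ] H) (R : H →L[ℂ] H)
    (hR : R = (ContinuousLinearMap.adjoint X).comp X + X.comp (ContinuousLinearMap.adjoint X)) :
    (numRadius X) ^ 4 ≥ (1 / 16 : ℝ) * ‖R‖ ^ 2 + (1 / 4 : ℝ) * (cNum (X.comp X)) ^ 2
      + (1 / 8 : ℝ) * crawford ((X.comp X).comp R + R.comp (X.comp X)) := by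
  rcases subsingleton_or_nontrivial H with hH | hH
  · -- trivial space: everything is zero
    have hno : ∀ x : H, ‖x‖ ≠ 1 := by
      intro x
      rw [Subsingleton.elim x 0, norm_zero]
      norm_num
    have h1 : numRadius X = 0 := by
      unfold numRadius
      have : {r : ℝ | ∃ x : H, ‖x‖ = 1 ∧ r = ‖(inner ℂ (X x) x : ℂ)‖} = ∅ := by
        ext r
        simp only [Set.mem_setOf_eq, Set.mem_empty_iff_false, iff_false]
        rintro ⟨x, hx, -⟩
        exact hno x hx
      rw [this, Real.sSup_empty]
    have h2 : crawford ((X.comp X).comp R + R.comp (X.comp X)) = 0 := by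
      unfold crawford
      have : {r : ℝ | ∃ x : H, ‖x‖ = 1 ∧
          r = ‖(inner ℂ (((X.comp X).comp R + R.comp (X.comp X)) x) x : ℂ)‖} = ∅ := by
        ext r
        simp only [Set.mem_setOf_eq, Set.mem_empty_iff_false, iff_false]
        rintro ⟨x, hx, -⟩
        exact hno x hx
      rw [this, Real.sInf_empty]
    have h3 : cNum (X.comp X) = 0 := by
      unfold cNum
      have heach : ∀ θ : ℝ, sInf {r : ℝ | ∃ x : H, ‖x‖ = 1 ∧
          r = ‖reOp (Complex.exp (θ * Complex.I) • X.comp X) x‖} = 0 := by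
        intro θ
        have : {r : ℝ | ∃ x : H, ‖x‖ = 1 ∧
            r = ‖reOp (Complex.exp (θ * Complex.I) • X.comp X) x‖} = ∅ := by
          ext r
          simp only [Set.mem_setOf_eq, Set.mem_empty_iff_false, iff_false]
          rintro ⟨x, hx, -⟩
          exact hno x hx
        rw [this, Real.sInf_empty]
      simp only [heach]
      exact ciInf_const
    have hR0 : R = 0 := Subsingleton.elim _ _
    rw [h1, h2, h3, hR0]
    norm_num
  · -- nontrivial space
    obtain ⟨y₀, hy₀⟩ := exists_ne (0 : H)
    have hny₀ : ‖y₀‖ ≠ 0 := norm_ne_zero_iff.mpr hy₀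
    set e : H := ((‖y₀‖⁻¹ : ℝ) : ℂ) • y₀ with he_def
    have he : ‖e‖ = 1 := by
      rw [he_def, norm_smul, Complex.norm_real, Real.norm_eq_abs, abs_inv,
        _root_.abs_of_nonneg (norm_nonneg y₀), inv_mul_cancel₀ hny₀]
    set w : ℝ := numRadius X with hw_def
    set c : ℝ := cNum (X.comp X) with hc_def
    set S : H →L[ℂ] H := (X.comp X).comp R + R.comp (X.comp X) with hS_def
    set m : ℝ := crawford S with hm_def
    set X' : H →L[ℂ] H := ContinuousLinearMap.adjoint X with hX'_def
    -- basic facts about w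
    have hwmem : ∀ y : H, ‖y‖ = 1 → ‖(inner ℂ (X y) y : ℂ)‖ ≤ w := by
      intro y hy
      apply le_csSup
      · refine ⟨‖X‖, ?_⟩
        rintro r ⟨x, hx, rfl⟩
        calc ‖(inner ℂ (X x) x : ℂ)‖ ≤ ‖X x‖ * ‖x‖ := norm_inner_le_norm _ _
          _ ≤ ‖X‖ * ‖x‖ * ‖x‖ := by
              have := X.le_opNorm x
              nlinarith [norm_nonneg x]
          _ = ‖X‖ := by rw [hx]; ring
      · exact ⟨y, hy, rfl⟩
    have hw0 : 0 ≤ w := le_trans (norm_nonneg _) (hwmem e he)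
    -- basic facts about m
    have hm_le : ∀ x : H, ‖x‖ = 1 → m ≤ ‖(inner ℂ (S x) x : ℂ)‖ := by
      intro x hx
      apply csInf_le
      · refine ⟨0, ?_⟩
        rintro r ⟨y, hy, rfl⟩
        exact norm_nonneg _
      · exact ⟨x, hx, rfl⟩
    -- basic facts about c
    have hc0 : 0 ≤ c := by
      rw [hc_def, cNum]
      apply Real.iInf_nonneg
      intro θ
      apply Real.sInf_nonneg
      rintro r ⟨y, hy, rfl⟩
      exact norm_nonneg _
    have hc_le : ∀ (φ : ℝ) (x : H), ‖x‖ = 1 →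
        c ≤ ‖reOp (Complex.exp ((φ : ℂ) * Complex.I) • X.comp X) x‖ := by
      intro φ x hx
      have step1 : c ≤ sInf {r : ℝ | ∃ y : H, ‖y‖ = 1 ∧
          r = ‖reOp (Complex.exp ((φ : ℂ) * Complex.I) • X.comp X) y‖} := by
        rw [hc_def, cNum]
        apply ciInf_le
        refine ⟨0, ?_⟩
        rintro r ⟨θ, rfl⟩
        apply Real.sInf_nonneg
        rintro s ⟨y, hy, rfl⟩
        exact norm_nonneg _
      refine le_trans step1 (csInf_le ?_ ⟨x, hx, rfl⟩)
      refine ⟨0, ?_⟩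
      rintro r ⟨y, hy, rfl⟩
      exact norm_nonneg _
    -- R is self-adjoint
    have hRsa : IsSelfAdjoint R := by
      rw [hR]
      rw [IsSelfAdjoint, star_add, ContinuousLinearMap.star_eq_adjoint,
        ContinuousLinearMap.star_eq_adjoint, ContinuousLinearMap.adjoint_comp,
        ContinuousLinearMap.adjoint_comp, ContinuousLinearMap.adjoint_adjoint, add_comm]
    -- the key pointwise estimate
    have hmain : ∀ x : H, ‖x‖ = 1 →
        (1/16 : ℝ) * ‖R x‖ ^ 2 + (1/4 : ℝ) * c ^ 2 + (1/8 : ℝ) * m ≤ w ^ 4 := by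
      intro x hx
      set z : ℂ := inner ℂ (S x) x with hz_def
      set φ : ℝ := z.arg with hφ_def
      set u : ℂ := Complex.exp ((↑(φ/2) : ℂ) * Complex.I) with hu_def
      set v : ℂ := Complex.exp ((φ : ℂ) * Complex.I) with hv_def
      have huv : u * u = v := by
        rw [hu_def, hv_def, ← Complex.exp_add]
        congr 1
        push_cast
        ring
      have hu1 : u * (starRingEnd ℂ) u = 1 := by
        rw [Complex.mul_conj]
        norm_cast
        rw [Complex.normSq_eq_norm_sq, hu_def, Complex.norm_exp_ofReal_mul_I]
        norm_num
      have hui : (starRingEnd ℂ) u = u⁻¹ :=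
        eq_inv_of_mul_eq_one_left (by rw [mul_comm]; exact hu1)
      have hu0 : u ≠ 0 := Complex.exp_ne_zero _
      set A : H →L[ℂ] H := reOp (u • X) with hA_def
      set B : H →L[ℂ] H := reOp (v • X.comp X) with hB_def
      have hadjA : ContinuousLinearMap.adjoint (u • X) = (starRingEnd ℂ) u • X' := by
        rw [← ContinuousLinearMap.star_eq_adjoint, star_smul,
          ContinuousLinearMap.star_eq_adjoint, hX'_def]
        rfl
      have hadjB : ContinuousLinearMap.adjoint (v • X.comp X)
          = (starRingEnd ℂ) v • X'.comp X' := by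
        rw [← ContinuousLinearMap.star_eq_adjoint, star_smul,
          ContinuousLinearMap.star_eq_adjoint, ContinuousLinearMap.adjoint_comp, hX'_def]
        rfl
      have hAapp : ∀ y : H, A y = (2:ℂ)⁻¹ • (u • X y + (starRingEnd ℂ) u • X' y) := by
        intro y
        rw [hA_def, reOp, hadjA]
        simp
      have hBapp : ∀ y : H, B y = (2:ℂ)⁻¹ • (v • X (X y) + (starRingEnd ℂ) v • X' (X' y)) := by
        intro y
        rw [hB_def, reOp, hadjB]
        simp
      -- A is self-adjoint with norm at most w
      have hAsa : IsSelfAdjoint A := aux_reOp_isSelfAdjoint _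
      have hAnorm : ‖A‖ ≤ w := by
        apply aux_norm_le_of_inner hAsa hw0
        intro y hy
        have hXy : (inner ℂ (X' y) y : ℂ) = (starRingEnd ℂ) (inner ℂ (X y) y : ℂ) := by
          rw [hX'_def, ContinuousLinearMap.adjoint_inner_left, ← inner_conj_symm]
        have hval : (inner ℂ (A y) y : ℂ)
            = (2:ℂ)⁻¹ * (((starRingEnd ℂ) u * inner ℂ (X y) y)
              + (starRingEnd ℂ) ((starRingEnd ℂ) u * inner ℂ (X y) y)) := by
          rw [hAapp, inner_smul_left, inner_add_left, inner_smul_left, inner_smul_left, hXy]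
          rw [map_mul, Complex.conj_conj]
          have : (starRingEnd ℂ) ((2:ℂ)⁻¹) = (2:ℂ)⁻¹ := by
            rw [show ((2:ℂ)⁻¹) = (((2⁻¹:ℝ)):ℂ) by norm_num, Complex.conj_ofReal]
          rw [this]
        rw [hval]
        set t : ℂ := (starRingEnd ℂ) u * inner ℂ (X y) y with ht_def
        rw [Complex.add_conj]
        have : (2:ℂ)⁻¹ * ((2 * t.re : ℝ) : ℂ) = ((t.re : ℝ) : ℂ) := by
          push_cast
          ring
        rw [this, Complex.norm_real, Real.norm_eq_abs]
        calc |t.re| ≤ ‖t‖ := Complex.abs_re_le_norm t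
          _ = ‖(starRingEnd ℂ) u‖ * ‖(inner ℂ (X y) y : ℂ)‖ := by
              rw [ht_def, norm_mul]
          _ = ‖(inner ℂ (X y) y : ℂ)‖ := by
              rw [Complex.norm_conj, hu_def, Complex.norm_exp_ofReal_mul_I, one_mul]
          _ ≤ w := hwmem y hy
      -- key algebraic identity
      have hkey : A (A x) = (4:ℂ)⁻¹ • R x + (2:ℂ)⁻¹ • B x := by
        rw [hAapp, hAapp, hBapp, hR, ← huv]
        simp only [ContinuousLinearMap.add_apply, ContinuousLinearMap.coe_comp',
          Function.comp_apply, map_add, map_smul, smul_add, smul_smul, map_mul, hui, hX'_def]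
        match_scalars
        all_goals field_simp
        all_goals ring
      -- cross term computation
      have hzsplit : z = inner ℂ (X (X (R x))) x + inner ℂ (R (X (X x))) x := by
        rw [hz_def, hS_def]
        simp only [ContinuousLinearMap.add_apply, ContinuousLinearMap.coe_comp',
          Function.comp_apply, inner_add_left]
      have hq : (inner ℂ (R x) (X' (X' x)) : ℂ) = inner ℂ (X (X (R x))) x := by
        rw [hX'_def, ContinuousLinearMap.adjoint_inner_right,
          ContinuousLinearMap.adjoint_inner_right]
      have hp : (inner ℂ (R x) (X (X x)) : ℂ) = (starRingEnd ℂ) (inner ℂ (R (X (X x))) x : ℂ) := by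
        rw [← inner_conj_symm]
        congr 1
        calc (inner ℂ (X (X x)) (R x) : ℂ)
            = inner ℂ (X (X x)) ((ContinuousLinearMap.adjoint R) x) := by rw [hRsa.adjoint_eq]
          _ = inner ℂ (R (X (X x))) x := ContinuousLinearMap.adjoint_inner_right _ _ _
      have hvz : (starRingEnd ℂ) v * z = ((‖z‖ : ℝ) : ℂ) := by
        have hzeq : ((‖z‖ : ℝ) : ℂ) * v = z := by
          rw [hv_def, hφ_def]
          exact Complex.norm_mul_exp_arg_mul_I z
        have hv1 : v * (starRingEnd ℂ) v = 1 := by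
          rw [Complex.mul_conj]
          norm_cast
          rw [Complex.normSq_eq_norm_sq, hv_def, Complex.norm_exp_ofReal_mul_I]
          norm_num
        calc (starRingEnd ℂ) v * z = (starRingEnd ℂ) v * (((‖z‖ : ℝ) : ℂ) * v) := by
              rw [hzeq]
          _ = ((‖z‖ : ℝ) : ℂ) * (v * (starRingEnd ℂ) v) := by ring
          _ = ((‖z‖ : ℝ) : ℂ) := by rw [hv1, mul_one]
      have hcross : (inner ℂ (R x) (B x) : ℂ).re = 2⁻¹ * ‖z‖ := by
        rw [hBapp, inner_smul_right, inner_add_right, inner_smul_right, inner_smul_right,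
          hp, hq]
        set p : ℂ := inner ℂ (R (X (X x))) x with hp_def
        set q : ℂ := inner ℂ (X (X (R x))) x with hq_def
        have hzpq : z = q + p := hzsplit
        have h1 : (v * (starRingEnd ℂ) p).re = ((starRingEnd ℂ) v * p).re := by
          rw [← Complex.conj_re (v * (starRingEnd ℂ) p), map_mul, Complex.conj_conj]
        have hvzre : ((starRingEnd ℂ) v * (q + p)).re = ‖z‖ := by
          rw [← hzpq, hvz, Complex.ofReal_re]
        have expand : ((2:ℂ)⁻¹ * (v * (starRingEnd ℂ) p + (starRingEnd ℂ) v * q)).re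
            = 2⁻¹ * ((v * (starRingEnd ℂ) p).re + ((starRingEnd ℂ) v * q).re) := by
          have : ((2:ℂ)⁻¹) = (((2⁻¹ : ℝ)) : ℂ) := by norm_num
          rw [this, Complex.re_ofReal_mul, Complex.add_re]
        rw [expand, h1]
        have : ((starRingEnd ℂ) v * p).re + ((starRingEnd ℂ) v * q).re
            = ((starRingEnd ℂ) v * (q + p)).re := by
          rw [mul_add, Complex.add_re]
          ring
        rw [this, hvzre]
      -- norm expansion
      have hexp : ‖A (A x)‖ ^ 2
          = (1/16 : ℝ) * ‖R x‖ ^ 2 + (1/8 : ℝ) * ‖z‖ + (1/4 : ℝ) * ‖B x‖ ^ 2 := by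
        rw [hkey, norm_add_sq (𝕜 := ℂ)]
        have hn1 : ‖(4:ℂ)⁻¹ • R x‖ ^ 2 = (1/16 : ℝ) * ‖R x‖ ^ 2 := by
          rw [norm_smul, mul_pow]
          norm_num
        have hn2 : ‖(2:ℂ)⁻¹ • B x‖ ^ 2 = (1/4 : ℝ) * ‖B x‖ ^ 2 := by
          rw [norm_smul, mul_pow]
          norm_num
        have hn3 : RCLike.re (inner ℂ ((4:ℂ)⁻¹ • R x) ((2:ℂ)⁻¹ • B x) : ℂ)
            = (1/16 : ℝ) * ‖z‖ := by
          rw [inner_smul_left, inner_smul_right, RCLike.re_to_complex]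
          have h4 : (starRingEnd ℂ) ((4:ℂ)⁻¹) = (4:ℂ)⁻¹ := by
            rw [show ((4:ℂ)⁻¹) = (((4⁻¹:ℝ)):ℂ) by norm_num, Complex.conj_ofReal]
          rw [h4]
          have : (4:ℂ)⁻¹ * ((2:ℂ)⁻¹ * (inner ℂ (R x) (B x) : ℂ))
              = (((8⁻¹ : ℝ)) : ℂ) * (inner ℂ (R x) (B x) : ℂ) := by
            push_cast
            ring
          rw [this, Complex.re_ofReal_mul, hcross]
          ring
        rw [hn1, hn2, hn3]
        ring
      -- norm bound
      have hA2 : ‖A (A x)‖ ≤ w ^ 2 := by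
        calc ‖A (A x)‖ ≤ ‖A‖ * ‖A x‖ := A.le_opNorm _
          _ ≤ ‖A‖ * (‖A‖ * ‖x‖) := by
              have := A.le_opNorm x
              nlinarith [norm_nonneg A, norm_nonneg (A x)]
          _ = ‖A‖ ^ 2 := by rw [hx]; ring
          _ ≤ w ^ 2 := by nlinarith [norm_nonneg A]
      have hsq : ‖A (A x)‖ ^ 2 ≤ w ^ 4 := by
        nlinarith [norm_nonneg (A (A x)), hA2, hw0]
      -- combine
      have hmz : m ≤ ‖z‖ := by
        have := hm_le x hx
        exact this
      have hcB : c ^ 2 ≤ ‖B x‖ ^ 2 := by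
        have hle := hc_le φ x hx
        rw [← hB_def] at hle
        nlinarith [hc_le φ x hx, hc0, norm_nonneg (B x)]
      rw [hexp] at hsq
      linarith
    -- assemble: bound ‖R‖ using the pointwise estimate
    have hKin : 0 ≤ w ^ 4 - (1/4 : ℝ) * c ^ 2 - (1/8 : ℝ) * m := by
      have := hmain e he
      nlinarith [sq_nonneg ‖R e‖]
    set K : ℝ := Real.sqrt (16 * (w ^ 4 - (1/4 : ℝ) * c ^ 2 - (1/8 : ℝ) * m)) with hK_def
    have hK0 : 0 ≤ K := Real.sqrt_nonneg _
    have hK2 : K ^ 2 = 16 * (w ^ 4 - (1/4 : ℝ) * c ^ 2 - (1/8 : ℝ) * m) := by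
      rw [hK_def, Real.sq_sqrt]
      linarith
    have hRx : ∀ x : H, ‖R x‖ ≤ K * ‖x‖ := by
      intro x
      rcases eq_or_ne x 0 with rfl | hx
      · simp
      · have hnx : ‖x‖ ≠ 0 := norm_ne_zero_iff.mpr hx
        set ux : H := ((‖x‖⁻¹ : ℝ) : ℂ) • x with hux_def
        have hux : ‖ux‖ = 1 := by
          rw [hux_def, norm_smul, Complex.norm_real, Real.norm_eq_abs, abs_inv,
            _root_.abs_of_nonneg (norm_nonneg x), inv_mul_cancel₀ hnx]
        have h1 := hmain ux hux
        have h2 : ‖R ux‖ ^ 2 ≤ K ^ 2 := by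
          rw [hK2]
          linarith
        have h3 : ‖R ux‖ ≤ K := by
          nlinarith [norm_nonneg (R ux), hK0]
        have h4 : R ux = ((‖x‖⁻¹ : ℝ) : ℂ) • R x := by
          rw [hux_def, map_smul]
        rw [h4, norm_smul, Complex.norm_real, Real.norm_eq_abs, abs_inv,
          _root_.abs_of_nonneg (norm_nonneg x)] at h3
        have hxpos : (0:ℝ) < ‖x‖ := lt_of_le_of_ne (norm_nonneg x) (Ne.symm hnx)
        calc ‖R x‖ = ‖x‖ * (‖x‖⁻¹ * ‖R x‖) := by field_simp
          _ ≤ ‖x‖ * K := by nlinarith [h3, hxpos]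
          _ = K * ‖x‖ := mul_comm _ _
    have hRnorm : ‖R‖ ≤ K := R.opNorm_le_bound hK0 hRx
    have hRsq : ‖R‖ ^ 2 ≤ K ^ 2 := by nlinarith [norm_nonneg R]
    rw [hK2] at hRsq
    rw [ge_iff_le]
    linarith
end
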